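/- arXiv:math/0407393 — 6 statements merged into one kernel-verified Lean document; each statement's English description precedes it below -/
import Mathlib

section
/- Let p be an odd prime and n ≥ 1. Let G_n be a cyclic group of order p^n with generator γ, and let ξ_n = Σ_{σ ∈ G_n, σ^p = 1} σ in the group algebra Z_p[G_n]. Then ξ_n = Σ_{a=0}^{p-1} γ^{a·p^{n-1}}, and its image in F_p[G_n] equals (γ - 1)^{p^n - p^{n-1}}. -/
open MonoidAlgebra Finset

/-- `G_n`: cyclic group of order `p^n`. -/
abbrev Gn (p n : ℕ) := Multiplicative (ZMod (p ^ n))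

/-- `Λ_n = ℤ_p[G_n]`. -/
abbrev Lam (p : ℕ) [Fact p.Prime] (n : ℕ) := MonoidAlgebra ℤ_[p] (Gn p n)

/-- `ξ_n`: sum of the elements of the subgroup of order `p`. -/
noncomputable def xi (p : ℕ) [Fact p.Prime] (n : ℕ) : Lam p n :=
  ∑ σ ∈ Finset.univ.filter (fun σ : Gn p n => σ ^ p = 1), MonoidAlgebra.of ℤ_[p] (Gn p n) σ

/-- The natural surjection `G_{n+1} →* G_n`. -/
noncomputable def projHom (p n : ℕ) : Gn p (n+1) →* Gn p n :=
  AddMonoidHom.toMultiplicative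
    (ZMod.castHom (pow_dvd_pow p (Nat.le_succ n)) (ZMod (p^n))).toAddMonoidHom

/-- `π_{n+1/n} : Λ_{n+1} →+* Λ_n`, the induced projection of group algebras. -/
noncomputable def piMap (p : ℕ) [Fact p.Prime] (n : ℕ) : Lam p (n+1) →+* Lam p n :=
  MonoidAlgebra.mapDomainRingHom ℤ_[p] (projHom p n)

/-- `ν_{n/n+1} : Λ_n → Λ_{n+1}`, sending `σ` to the sum of its preimages. -/
noncomputable def nuMap (p : ℕ) [Fact p.Prime] (n : ℕ) (f : Lam p n) : Lam p (n+1) :=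
  ∑ τ : Gn p (n+1), MonoidAlgebra.single τ (f.coeff (projHom p n τ))

/-- Reduction mod `p`: `ℤ_p[G_n] → 𝔽_p[G_n]` (coefficientwise). -/
noncomputable def red (p : ℕ) [Fact p.Prime] (n : ℕ) (f : Lam p n) :
    MonoidAlgebra (ZMod p) (Gn p n) :=
  MonoidAlgebra.ofCoeff (Finsupp.mapRange (PadicInt.toZMod) (map_zero _) f.coeff)

/-- The augmentation ideal `Ĩ_n` of `𝔽_p[G_n]`. -/
noncomputable def augIdeal (p : ℕ) [Fact p.Prime] (n : ℕ) :
    Ideal (MonoidAlgebra (ZMod p) (Gn p n)) :=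
  RingHom.ker ((MonoidAlgebra.lift (ZMod p) (ZMod p) (Gn p n)) 1).toRingHom

/-- If `γ` generates `G_n` (`n ≥ 1`, `p` odd) then
`ξ_n = ∑_{a=0}^{p-1} γ^{a p^{n-1}}` and the image of `ξ_n` in `𝔽_p[G_n]`
is `(γ - 1)^{p^n - p^{n-1}}`. -/
theorem stmt0 (p : ℕ) [Fact p.Prime] (hodd : Odd p) (n : ℕ) (hn : 1 ≤ n)
    (γ : Gn p n) (hγ : ∀ x : Gn p n, x ∈ Subgroup.zpowers γ) :
    xi p n = ∑ a ∈ Finset.range p, MonoidAlgebra.of ℤ_[p] (Gn p n) (γ ^ (a * p ^ (n-1))) ∧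
    red p n (xi p n) =
      (MonoidAlgebra.of (ZMod p) (Gn p n) γ - 1) ^ (p ^ n - p ^ (n-1)) := by
  have hp := (Fact.out : p.Prime)
  haveI : NeZero (p ^ n) := ⟨pow_ne_zero _ hp.ne_zero⟩
  have hord : orderOf γ = p ^ n := by
    rw [orderOf_eq_card_of_forall_mem_zpowers hγ]
    simp [Gn]
  set q := p ^ (n - 1) with hq
  have hq0 : 0 < q := pow_pos hp.pos _
  have hqp : q * p = p ^ n := by
    rw [hq, ← pow_succ]; congr 1; omega
  have hone : γ ^ (q * p) = 1 := by
    apply orderOf_dvd_iff_pow_eq_one.1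
    rw [hord, hqp]
  -- the set of p-torsion elements
  have hset : Finset.univ.filter (fun σ : Gn p n => σ ^ p = 1)
      = (Finset.range p).image (fun a => γ ^ (a * q)) := by
    ext σ
    simp only [mem_filter, mem_univ, true_and, mem_image, mem_range]
    constructor
    · intro hσ
      obtain ⟨k, rfl⟩ := (mem_powers_iff_mem_zpowers).2 (hγ σ)
      rw [← pow_mul] at hσ
      have hdvd : q * p ∣ k * p := by
        rw [hqp, ← hord]; exact orderOf_dvd_of_pow_eq_one hσ
      obtain ⟨m, rfl⟩ := (Nat.mul_dvd_mul_iff_right hp.pos).1 hdvd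
      refine ⟨m % p, Nat.mod_lt _ hp.pos, ?_⟩
      rw [mul_comm (m % p) q]
      symm
      apply (pow_eq_pow_iff_modEq).2
      rw [hord, ← hqp]
      exact ((Nat.mod_modEq m p).mul_left' (c := q)).symm
    · rintro ⟨a, _, rfl⟩
      rw [← pow_mul, mul_assoc, mul_comm a (q * p), pow_mul, hone, one_pow]
  have hinj : Set.InjOn (fun a => γ ^ (a * q)) (Finset.range p) := by
    intro a ha b hb hab
    simp only [Finset.coe_range, Set.mem_Iio] at ha hb
    have := (pow_eq_pow_iff_modEq).1 hab
    rw [hord, ← hqp] at this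
    rw [hqp] at this
    have key : ∀ c, c < p → c * q < p ^ n := fun c hc => by
      rw [← hqp, mul_comm q p]; exact mul_lt_mul_of_pos_right hc hq0
    have : a * q = b * q := Nat.ModEq.eq_of_lt_of_lt this (key a ha) (key b hb)
    exact Nat.eq_of_mul_eq_mul_right hq0 this
  have h1 : xi p n = ∑ a ∈ Finset.range p,
      MonoidAlgebra.of ℤ_[p] (Gn p n) (γ ^ (a * q)) := by
    rw [xi, hset, Finset.sum_image hinj]
  refine ⟨h1, ?_⟩
  -- reduce mod p
  have h2 : red p n (xi p n) = ∑ a ∈ Finset.range p,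
      MonoidAlgebra.of (ZMod p) (Gn p n) (γ ^ (a * q)) := by
    rw [h1, red, MonoidAlgebra.coeff_sum, Finsupp.mapRange_finset_sum (PadicInt.toZMod (p := p)),
      MonoidAlgebra.ofCoeff_sum]
    refine Finset.sum_congr rfl fun a _ => ?_
    simp [MonoidAlgebra.of_apply]
  rw [h2]
  -- characteristic p
  haveI hchar : CharP (MonoidAlgebra (ZMod p) (Gn p n)) p := by
    refine charP_of_injective_algebraMap (R := ZMod p) (fun a b h => ?_) p
    rw [MonoidAlgebra.coe_algebraMap] at h
    have := congrArg (fun f : MonoidAlgebra (ZMod p) (Gn p n) => f.coeff 1) h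
    simpa using this
  set y := MonoidAlgebra.of (ZMod p) (Gn p n) γ with hy
  -- the polynomial identity (X-1)^(p-1) = ∑ X^a in 𝔽_p[X]
  have hpoly : ((Polynomial.X : Polynomial (ZMod p)) - 1) ^ (p - 1)
      = ∑ a ∈ Finset.range p, (Polynomial.X : Polynomial (ZMod p)) ^ a := by
    have hne : (Polynomial.X : Polynomial (ZMod p)) - 1 ≠ 0 := by
      have := Polynomial.X_sub_C_ne_zero (1 : ZMod p)
      simpa using this
    apply mul_right_cancel₀ hne
    rw [← pow_succ, Nat.sub_add_cancel hp.one_le, geom_sum_mul, sub_pow_char, one_pow]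
  -- evaluate at y^q
  have heval : (y ^ q - 1) ^ (p - 1) = ∑ a ∈ Finset.range p, (y ^ q) ^ a := by
    have := congrArg (Polynomial.aeval (y ^ q)) hpoly
    simpa [map_sub, map_pow, map_sum] using this
  have hexp : p ^ n - q = q * (p - 1) := by
    rw [Nat.mul_sub, mul_one, hqp]
  calc ∑ a ∈ Finset.range p, MonoidAlgebra.of (ZMod p) (Gn p n) (γ ^ (a * q))
      = ∑ a ∈ Finset.range p, (y ^ q) ^ a := by
        refine Finset.sum_congr rfl fun a _ => ?_
        rw [hy, map_pow, ← pow_mul, mul_comm a q]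
    _ = (y ^ q - 1) ^ (p - 1) := heval.symm
    _ = ((y - 1) ^ q) ^ (p - 1) := by rw [hq, sub_pow_char_pow, one_pow]
    _ = (y - 1) ^ (p ^ n - q) := by rw [← pow_mul, hexp]
end

section
/- Let p be a prime, γ a generator of the cyclic group G_n of order p^n, and χ: G_n → Q̄_p^× a character of exact order p^n. Let f ∈ Λ_n = Z_p[G_n] with λ(f) < p^{n-1}(p-1). Then the p-adic valuation of χ(f) (extending ord_p(p) = 1) equals μ(f) + λ(f)/(p^{n-1}(p-1)). -/
open MonoidAlgebra Finset

lemma root_ne_zero {M₀ : Type*} [MonoidWithZero M₀] [NoZeroDivisors M₀] [Nontrivial M₀]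
    (x : M₀) (M : ℕ) (hM : 0 < M) (h : x ^ M = 1) : x ≠ 0 := by
  intro h0; rw [h0, zero_pow hM.ne'] at h; exact zero_ne_one h

section Val
open Polynomial


variable {K : Type} [Field K] (v : K → ℚ)
variable (hv_mul : ∀ x y : K, x ≠ 0 → y ≠ 0 → v (x * y) = v x + v y)
variable (hv_add : ∀ x y : K, x ≠ 0 → y ≠ 0 → x + y ≠ 0 → min (v x) (v y) ≤ v (x + y))

include hv_mul

lemma v_one : v 1 = 0 := by
  have := hv_mul 1 1 one_ne_zero one_ne_zero
  rw [mul_one] at this; linarith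

lemma v_neg (x : K) (hx : x ≠ 0) : v (-x) = v x := by
  have h1 : v ((-1 : K) * (-1)) = v (-1) + v (-1) :=
    hv_mul _ _ (neg_ne_zero.mpr one_ne_zero) (neg_ne_zero.mpr one_ne_zero)
  rw [neg_mul_neg, one_mul, v_one v hv_mul] at h1
  have h2 : v (-1 : K) = 0 := by linarith
  have h3 : v ((-1 : K) * x) = v (-1) + v x := hv_mul _ _ (neg_ne_zero.mpr one_ne_zero) hx
  rw [neg_one_mul, h2, zero_add] at h3
  exact h3

lemma v_pow (x : K) (hx : x ≠ 0) (k : ℕ) : v (x ^ k) = k * v x := by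
  induction k with
  | zero => simpa using v_one v hv_mul
  | succ k ih =>
      rw [pow_succ, hv_mul _ _ (pow_ne_zero k hx) hx, ih]
      push_cast; ring

lemma v_prod {α : Type*} (s : Finset α) (F : α → K) (h : ∀ a ∈ s, F a ≠ 0) :
    v (∏ a ∈ s, F a) = ∑ a ∈ s, v (F a) := by
  classical
  induction s using Finset.induction with
  | empty => simpa using v_one v hv_mul
  | @insert a s hna ih =>
      rw [Finset.prod_insert hna, Finset.sum_insert hna,
        hv_mul _ _ (h a (Finset.mem_insert_self a s))
          (Finset.prod_ne_zero_iff.mpr fun b hb => h b (Finset.mem_insert_of_mem hb)),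
        ih fun b hb => h b (Finset.mem_insert_of_mem hb)]

include hv_add

lemma v_add_ge (c : ℚ) (x y : K) (hx : x = 0 ∨ c ≤ v x) (hy : y = 0 ∨ c ≤ v y) :
    x + y = 0 ∨ c ≤ v (x + y) := by
  rcases hx with rfl | hx
  · simpa using hy
  rcases hy with rfl | hy
  · simpa using Or.inr hx
  by_cases hx0 : x = 0
  · subst hx0; simpa using Or.inr hy
  by_cases hy0 : y = 0
  · subst hy0; simpa using Or.inr hx
  by_cases hxy : x + y = 0
  · exact Or.inl hxy
  · exact Or.inr (le_trans (le_min hx hy) (hv_add x y hx0 hy0 hxy))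

lemma v_add_gt (c : ℚ) (x y : K) (hx : x = 0 ∨ c < v x) (hy : y = 0 ∨ c < v y) :
    x + y = 0 ∨ c < v (x + y) := by
  rcases hx with rfl | hx
  · simpa using hy
  rcases hy with rfl | hy
  · simpa using Or.inr hx
  by_cases hx0 : x = 0
  · subst hx0; simpa using Or.inr hy
  by_cases hy0 : y = 0
  · subst hy0; simpa using Or.inr hx
  by_cases hxy : x + y = 0
  · exact Or.inl hxy
  · exact Or.inr (lt_of_lt_of_le (lt_min hx hy) (hv_add x y hx0 hy0 hxy))

lemma v_sum_ge {α : Type*} (c : ℚ) (s : Finset α) (F : α → K)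
    (h : ∀ a ∈ s, F a = 0 ∨ c ≤ v (F a)) :
    (∑ a ∈ s, F a) = 0 ∨ c ≤ v (∑ a ∈ s, F a) := by
  classical
  induction s using Finset.induction with
  | empty => simp
  | @insert a s hna ih =>
      rw [Finset.sum_insert hna]
      exact v_add_ge v hv_mul hv_add c _ _ (h a (Finset.mem_insert_self a s))
        (ih fun b hb => h b (Finset.mem_insert_of_mem hb))

/-- dominant term -/
lemma v_add_eq (x y : K) (hx : x ≠ 0) (hy : y = 0 ∨ v x < v y) :
    x + y ≠ 0 ∧ v (x + y) = v x := by
  rcases hy with rfl | hy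
  · simpa using hx
  by_cases hy0 : y = 0
  · subst hy0; simpa using hx
  have hne : x + y ≠ 0 := by
    intro h
    have hyx : y = -x := by linear_combination h
    rw [hyx, v_neg v hv_mul x hx] at hy
    exact lt_irrefl _ hy
  refine ⟨hne, le_antisymm ?_ ?_⟩
  · have h2 := hv_add (x + y) (-y) hne (neg_ne_zero.mpr hy0) (by simpa using hx)
    rw [add_neg_cancel_right, v_neg v hv_mul y hy0] at h2
    cases le_total (v (x+y)) (v y) with
    | inl h => simpa [min_eq_left h] using h2
    | inr h => rw [min_eq_right h] at h2; linarith
  · have h1 := hv_add x y hx hy0 hne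
    rw [min_eq_left (le_of_lt hy)] at h1
    exact h1

variable (v_one' : v 1 = 0)
variable (v_pow' : ∀ (x : K), x ≠ 0 → ∀ (k : ℕ), v (x ^ k) = k * v x)
variable (v_prod' : ∀ {α : Type} (s : Finset α) (F : α → K), (∀ a ∈ s, F a ≠ 0) →
    v (∏ a ∈ s, F a) = ∑ a ∈ s, v (F a))
variable (v_sum_ge' : ∀ {α : Type} (c : ℚ) (s : Finset α) (F : α → K),
    (∀ a ∈ s, F a = 0 ∨ c ≤ v (F a)) → (∑ a ∈ s, F a) = 0 ∨ c ≤ v (∑ a ∈ s, F a))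


include v_one' v_pow' in
lemma v_root_zero (x : K) (M : ℕ) (hM : 0 < M) (h : x ^ M = 1) : v x = 0 := by
  have hx := root_ne_zero x M hM h
  have := v_pow' x hx M
  rw [h, v_one'] at this
  have hM' : (M : ℚ) ≠ 0 := Nat.cast_ne_zero.mpr hM.ne'
  field_simp at this
  rcases mul_eq_zero.mp this.symm with h' | h'
  · exact absurd h' hM'
  · exact h'

lemma prod_one_sub_primroot {M : ℕ} (hM : 0 < M) {ξ : K} (hξ : IsPrimitiveRoot ξ M) :
    ∏ i ∈ Ico 1 M, (1 - ξ ^ i) = (M : K) := by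
  have h1 : (X ^ M - C ((1:K))) = ∏ i ∈ range M, (X - C (ξ ^ i)) := by
    simpa using X_pow_sub_C_eq_prod hξ hM (one_pow M)
  have h2 : ∏ i ∈ range M, (X - C (ξ ^ i)) = (X - 1) * ∏ i ∈ Ico 1 M, (X - C (ξ ^ i)) := by
    rw [range_eq_Ico, prod_eq_prod_Ico_succ_bot hM]
    simp
  have h3 : (X ^ M - C (1:K)) = (X - 1) * ∑ i ∈ range M, (X:K[X]) ^ i := by
    rw [mul_comm, geom_sum_mul, map_one]
  have h4 : (∏ i ∈ Ico 1 M, (X - C (ξ ^ i))) = ∑ i ∈ range M, (X:K[X]) ^ i := by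
    apply mul_left_cancel₀ (a := (X : K[X]) - 1)
    · simpa using X_sub_C_ne_zero (1:K)
    · rw [← h2, ← h1, h3]
  have := congrArg (Polynomial.eval (1:K)) h4
  simpa [eval_prod] using this




include hv_mul v_one' v_pow' v_sum_ge' in
lemma v_one_sub_pow_le {M : ℕ} (hM : 0 < M) (ξ : K) (hξM : ξ ^ M = 1)
    (j : ℕ) (hj : ξ ^ j ≠ 1) : v (1 - ξ) ≤ v (1 - ξ ^ j) := by
  have hξ0 : ξ ≠ 0 := root_ne_zero ξ M hM hξM
  have hv0 : v ξ = 0 := v_root_zero v hv_mul hv_add v_one' v_pow' ξ M hM hξM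
  set g : K := ∑ i ∈ range j, ξ ^ i with hg
  have key : (1 - ξ) * g = 1 - ξ ^ j := by
    have := geom_sum_mul ξ j
    rw [hg]; linear_combination -this
  have h1ξ : (1:K) - ξ ≠ 0 := by
    intro h
    have : ξ = 1 := by linear_combination -h
    exact hj (by rw [this, one_pow])
  have h1ξj : (1:K) - ξ ^ j ≠ 0 := sub_ne_zero_of_ne (Ne.symm hj)
  have hgnz : g ≠ 0 := by
    intro h; rw [h, mul_zero] at key; exact h1ξj key.symm
  have hge : (0:ℚ) ≤ v g := by
    rcases v_sum_ge' 0 (range j) (fun i => ξ ^ i) (fun i _ => Or.inr (by rw [v_pow' ξ hξ0 i, hv0, mul_zero])) with h | h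
    · exact absurd h hgnz
    · exact h
  have := hv_mul (1 - ξ) g h1ξ hgnz
  rw [key] at this
  linarith

include hv_mul v_one' v_pow' v_sum_ge' in
lemma v_one_sub_eq {M : ℕ} (hM : 1 < M) {ζ : K} (hζ : IsPrimitiveRoot ζ M)
    (i : ℕ) (hi : i.Coprime M) : v (1 - ζ ^ i) = v (1 - ζ) := by
  haveI : NeZero M := ⟨by omega⟩
  have hiM : ζ ^ i ≠ 1 := by
    intro h
    have hd := (hζ.pow_eq_one_iff_dvd i).mp h
    have hgcd : Nat.gcd i M = M := Nat.gcd_eq_right hd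
    rw [hi] at hgcd; omega
  have hle : v (1 - ζ) ≤ v (1 - ζ ^ i) :=
    v_one_sub_pow_le v hv_mul hv_add v_one' v_pow' v_sum_ge' (by omega) ζ hζ.pow_eq_one i hiM
  have hprim : IsPrimitiveRoot (ζ ^ i) M := hζ.pow_of_coprime i hi
  obtain ⟨j, hjM, hjeq⟩ := hprim.eq_pow_of_pow_eq_one hζ.pow_eq_one
  have hne1 : (ζ ^ i) ^ j ≠ 1 := by rw [hjeq]; exact hζ.ne_one hM
  have hge : v (1 - ζ ^ i) ≤ v (1 - (ζ ^ i) ^ j) :=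
    v_one_sub_pow_le v hv_mul hv_add v_one' v_pow' v_sum_ge' (by omega) (ζ ^ i) hprim.pow_eq_one j hne1
  rw [hjeq] at hge
  exact le_antisymm hge hle

include hv_mul v_one' v_pow' v_prod' v_sum_ge' in
lemma v_zeta_sub_one (p : ℕ) (hp : p.Prime) (n : ℕ) (hn : 1 ≤ n) {ζ : K}
    (hζ : IsPrimitiveRoot ζ (p ^ n)) (hvp : v ((p : ℕ) : K) = 1) :
    ((p : K) ≠ 0) ∧ v (1 - ζ) = 1 / ((p ^ (n-1) * (p - 1) : ℕ) : ℚ) := by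
  have hp2 : 2 ≤ p := hp.two_le
  set N' : ℕ := p ^ (n - 1) with hN'def
  set N : ℕ := p ^ n with hNdef
  have hNN' : N = p * N' := by
    rw [hNdef, hN'def, ← pow_succ']
    congr 1; omega
  have hN'pos : 0 < N' := pow_pos hp.pos _
  have hNpos : 0 < N := pow_pos hp.pos _
  have hN1 : 1 < N := by
    calc 1 < 2 ^ 1 := by norm_num
    _ ≤ p ^ n := Nat.pow_le_pow_left hp2 n |>.trans' (Nat.pow_le_pow_right (by omega) hn) |>.trans (le_refl _)
  have hζp : IsPrimitiveRoot (ζ ^ p) N' := hζ.pow hNpos hNN'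
  have hA : ∏ i ∈ Ico 1 N, (1 - ζ ^ i) = (N : K) := prod_one_sub_primroot v hv_mul hv_add hNpos hζ
  have hB : ∏ j ∈ Ico 1 N', (1 - (ζ ^ p) ^ j) = (N' : K) := prod_one_sub_primroot v hv_mul hv_add hN'pos hζp
  -- the multiples of p in [1, N)
  have hmap : (Ico 1 N).filter (fun i => p ∣ i) =
      (Ico 1 N').map ⟨fun j => p * j, fun a b h => by
        exact Nat.eq_of_mul_eq_mul_left hp.pos h⟩ := by
    ext i
    simp only [mem_filter, mem_Ico, mem_map, Function.Embedding.coeFn_mk]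
    constructor
    · rintro ⟨⟨h1, h2⟩, j, rfl⟩
      refine ⟨j, ⟨?_, ?_⟩, rfl⟩
      · by_contra h; push_neg at h; interval_cases j; omega
      · rw [hNN'] at h2; exact lt_of_mul_lt_mul_left h2 (Nat.zero_le p)
    · rintro ⟨j, ⟨h1, h2⟩, rfl⟩
      refine ⟨⟨?_, ?_⟩, ⟨j, rfl⟩⟩
      · exact Nat.one_le_iff_ne_zero.mpr (Nat.mul_ne_zero (by omega) (by omega))
      · rw [hNN']; exact Nat.mul_lt_mul_of_pos_left h2 hp.pos
  have hfac : ∀ i ∈ Ico 1 N, (1:K) - ζ ^ i ≠ 0 := by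
    intro i hi
    rw [mem_Ico] at hi
    exact sub_ne_zero_of_ne (Ne.symm (hζ.pow_ne_one_of_pos_of_lt (by omega) hi.2))
  have hmul : ∏ i ∈ (Ico 1 N).filter (fun i => p ∣ i), (1 - ζ ^ i) = (N' : K) := by
    rw [hmap, prod_map, ← hB]
    refine Finset.prod_congr rfl fun j _ => ?_
    show (1:K) - ζ ^ (p * j) = 1 - (ζ ^ p) ^ j
    rw [pow_mul]
  set S := (Ico 1 N).filter (fun i => ¬ p ∣ i) with hSdef
  set P := ∏ i ∈ S, (1 - ζ ^ i) with hPdef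
  have hsplit : (N' : K) * P = (N : K) := by
    rw [← hA, ← hmul, hPdef, hSdef, Finset.prod_filter_mul_prod_filter_not]
  have hN'0 : (N' : K) ≠ 0 := by
    rw [← hB]
    refine Finset.prod_ne_zero_iff.mpr fun j hj => ?_
    rw [mem_Ico] at hj
    exact sub_ne_zero_of_ne (Ne.symm (hζp.pow_ne_one_of_pos_of_lt (by omega) hj.2))
  have hP0 : P ≠ 0 :=
    Finset.prod_ne_zero_iff.mpr fun i hi => hfac i (Finset.mem_of_mem_filter i hi)
  have hpP : (p : K) = P := by
    apply mul_left_cancel₀ hN'0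
    rw [hsplit, hNN']
    push_cast
    ring
  have hp0 : (p : K) ≠ 0 := by rw [hpP]; exact hP0
  refine ⟨hp0, ?_⟩
  -- valuation of P
  have hvP : v P = (S.card : ℚ) * v (1 - ζ) := by
    rw [hPdef, v_prod' S _ (fun i hi => hfac i (Finset.mem_of_mem_filter i hi))]
    rw [Finset.sum_congr rfl (fun i hi => ?_), Finset.sum_const, nsmul_eq_mul]
    rw [Finset.mem_filter, mem_Ico] at hi
    have hcop : Nat.Coprime i N := by
      rw [hNdef]
      exact (Nat.Coprime.pow_right n (((Nat.Prime.coprime_iff_not_dvd hp).mpr hi.2)).symm)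
    exact v_one_sub_eq v hv_mul hv_add v_one' v_pow' v_sum_ge' hN1 hζ i hcop
  have hcard : S.card = p ^ (n - 1) * (p - 1) := by
    have h1 := Finset.card_filter_add_card_filter_not (s := Ico 1 N)
      (p := fun i => p ∣ i)
    have h2 : ((Ico 1 N).filter (fun i => p ∣ i)).card = N' - 1 := by
      rw [hmap, Finset.card_map, Nat.card_Ico]
    have h3 : (Ico 1 N).card = N - 1 := Nat.card_Ico 1 N
    have hle : N' ≤ N := by rw [hNN']; exact Nat.le_mul_of_pos_left _ hp.pos
    have h1' : ((Ico 1 N).filter (fun i => p ∣ i)).card + S.card = (Ico 1 N).card := h1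
    have h4 : S.card = N - N' := by omega
    rw [h4, hNN']
    have : p * N' - N' = N' * (p - 1) := by
      rw [Nat.mul_sub, mul_one, mul_comm]
    rw [this, hN'def]
  rw [← hpP, hvp] at hvP
  rw [← hcard]
  have hScard0 : (0:ℚ) < (S.card : ℚ) := by
    have h5 : 0 < p ^ (n-1) * (p-1) := Nat.mul_pos (pow_pos hp.pos _) (by omega)
    rw [hcard]
    exact_mod_cast h5
  field_simp at hvP ⊢
  linarith


end Val

section GA


variable (p : ℕ) [hp : Fact p.Prime] (n : ℕ)

noncomputable def redHom : Lam p n →+* MonoidAlgebra (ZMod p) (Gn p n) :=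
  MonoidAlgebra.liftNCRingHom (MonoidAlgebra.singleOneRingHom.comp (PadicInt.toZMod))
    (MonoidAlgebra.of (ZMod p) (Gn p n)) (fun _ _ => Commute.all _ _)

lemma redHom_single (a : Gn p n) (b : ℤ_[p]) :
    redHom p n (MonoidAlgebra.single a b) = MonoidAlgebra.single a (PadicInt.toZMod b) := by
  rw [redHom, MonoidAlgebra.liftNCRingHom_single]
  show MonoidAlgebra.single 1 (PadicInt.toZMod b) * MonoidAlgebra.single a 1 = _
  rw [MonoidAlgebra.single_mul_single, one_mul, mul_one]

lemma red_eq (f : Lam p n) : red p n f = redHom p n f := by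
  induction f using MonoidAlgebra.induction_linear with
  | zero => simp [red]
  | add x y hx hy =>
      rw [red] at *
      rw [MonoidAlgebra.coeff_add, Finsupp.mapRange_add (map_add _), MonoidAlgebra.ofCoeff_add,
        map_add, hx, hy]
  | single a b => rw [red, MonoidAlgebra.coeff_single, Finsupp.mapRange_single,
      MonoidAlgebra.ofCoeff_single, redHom_single]

lemma red_ofγ (γ : Gn p n) :
    redHom p n (MonoidAlgebra.of ℤ_[p] (Gn p n) γ) = MonoidAlgebra.of (ZMod p) (Gn p n) γ := by
  rw [MonoidAlgebra.of_apply, redHom_single, map_one]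
  rfl

lemma ker_red (g : Lam p n) (h : red p n g = 0) : ∃ u, g = ((p:ℕ) : Lam p n) * u := by
  have hdvd : ∀ σ : Gn p n, ∃ c : ℤ_[p], g.coeff σ = (p : ℤ_[p]) * c := by
    intro σ
    have h0 : PadicInt.toZMod (g.coeff σ) = 0 := by
      have := congrArg (fun x => x.coeff σ) h
      simpa [red, Finsupp.mapRange_apply] using this
    have hker : g.coeff σ ∈ RingHom.ker (PadicInt.toZMod (p := p)) := h0
    rw [PadicInt.ker_toZMod, PadicInt.maximalIdeal_eq_span_p, Ideal.mem_span_singleton] at hker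
    obtain ⟨c, hc⟩ := hker
    exact ⟨c, hc⟩
  choose d hd using hdvd
  refine ⟨∑ σ ∈ g.coeff.support, MonoidAlgebra.single σ (d σ), ?_⟩
  rw [Finset.mul_sum]
  have key : ∀ σ : Gn p n, ((p:ℕ) : Lam p n) * MonoidAlgebra.single σ (d σ)
      = MonoidAlgebra.single σ (g.coeff σ) := by
    intro σ
    have h1 : ((p:ℕ) : Lam p n) = MonoidAlgebra.single (1 : Gn p n) ((p:ℕ) : ℤ_[p]) := by
      rw [← (map_natCast (MonoidAlgebra.singleOneRingHom :
        ℤ_[p] →+* MonoidAlgebra ℤ_[p] (Gn p n)) p)]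
      rfl
    rw [h1, MonoidAlgebra.single_mul_single, one_mul, ← hd σ]
  rw [Finset.sum_congr rfl fun σ _ => key σ]
  exact (MonoidAlgebra.sum_coeff_single g).symm

lemma eps_apply (R : Type*) [CommRing R] (g : MonoidAlgebra R (Gn p n)) :
    (MonoidAlgebra.lift R R (Gn p n)) 1 g = g.coeff.sum fun _ b => b := by
  rw [MonoidAlgebra.lift_apply]
  simp

lemma T_dvd_sub (R : Type*) [CommRing R] (γ : Gn p n) (hγ : ∀ x : Gn p n, ∃ k : ℕ, γ ^ k = x)
    (g : MonoidAlgebra R (Gn p n)) :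
    (MonoidAlgebra.of R (Gn p n) γ - 1) ∣
      (g - MonoidAlgebra.single 1 (g.coeff.sum fun _ b => b)) := by
  have hg : g = ∑ σ ∈ g.coeff.support, MonoidAlgebra.single σ (g.coeff σ) :=
    (MonoidAlgebra.sum_coeff_single g).symm
  have hsum : (MonoidAlgebra.single (1 : Gn p n) (g.coeff.sum fun _ b => b) : MonoidAlgebra R (Gn p n))
      = ∑ σ ∈ g.coeff.support, MonoidAlgebra.single (1 : Gn p n) (g.coeff σ) := by
    rw [Finsupp.sum]
    exact map_sum (MonoidAlgebra.singleAddHom (1 : Gn p n) : R →+ MonoidAlgebra R (Gn p n)) _ _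
  rw [hsum]
  conv_lhs => skip
  rw [show g - ∑ σ ∈ g.coeff.support, MonoidAlgebra.single (1 : Gn p n) (g.coeff σ)
      = ∑ σ ∈ g.coeff.support, (MonoidAlgebra.single σ (g.coeff σ)
          - MonoidAlgebra.single (1 : Gn p n) (g.coeff σ)) by
    rw [Finset.sum_sub_distrib, ← hg]]
  refine Finset.dvd_sum fun σ _ => ?_
  obtain ⟨k, hk⟩ := hγ σ
  have hfact : MonoidAlgebra.single σ (g.coeff σ) - MonoidAlgebra.single (1 : Gn p n) (g.coeff σ)
      = (MonoidAlgebra.of R (Gn p n) σ - 1) * MonoidAlgebra.single (1 : Gn p n) (g.coeff σ) := by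
    rw [sub_mul, one_mul]
    congr 1
    rw [MonoidAlgebra.of_apply, MonoidAlgebra.single_mul_single, mul_one, one_mul]
  rw [hfact]
  refine Dvd.dvd.mul_right ?_ _
  rw [← hk, map_pow]
  simpa using sub_dvd_pow_sub_pow (MonoidAlgebra.of R (Gn p n) γ) 1 k


lemma red_eps (g : Lam p n) :
    (MonoidAlgebra.lift (ZMod p) (ZMod p) (Gn p n)) 1 (red p n g)
      = PadicInt.toZMod ((MonoidAlgebra.lift ℤ_[p] ℤ_[p] (Gn p n)) 1 g) := by
  rw [eps_apply, eps_apply, red, MonoidAlgebra.coeff_ofCoeff]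
  rw [Finsupp.sum_mapRange_index (fun _ => rfl)]
  rw [Finsupp.sum, Finsupp.sum, map_sum]

lemma mem_augIdeal_iff (g : MonoidAlgebra (ZMod p) (Gn p n)) :
    g ∈ augIdeal p n ↔ (g.coeff.sum fun _ b => b) = 0 := by
  rw [augIdeal, RingHom.mem_ker, AlgHom.toRingHom_eq_coe, RingHom.coe_coe, eps_apply]

lemma augIdeal_eq (γ : Gn p n) (hγ : ∀ x : Gn p n, ∃ k : ℕ, γ ^ k = x) :
    augIdeal p n = Ideal.span {MonoidAlgebra.of (ZMod p) (Gn p n) γ - 1} := by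
  apply le_antisymm
  · intro g hg
    rw [mem_augIdeal_iff] at hg
    rw [Ideal.mem_span_singleton]
    have := T_dvd_sub p n (ZMod p) γ hγ g
    rw [hg] at this
    simpa using this
  · rw [Ideal.span_le, Set.singleton_subset_iff]
    show _ ∈ augIdeal p n
    rw [mem_augIdeal_iff]
    have : (MonoidAlgebra.of (ZMod p) (Gn p n) γ - 1 : MonoidAlgebra (ZMod p) (Gn p n)).coeff.sum
        (fun _ b => b) = (MonoidAlgebra.lift (ZMod p) (ZMod p) (Gn p n)) 1
          (MonoidAlgebra.of (ZMod p) (Gn p n) γ - 1) := (eps_apply p n _ _).symm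
    rw [this, map_sub, MonoidAlgebra.lift_of]
    simp


end GA

/-- Evaluation at a character `χ` of exact order `p^n`: if `λ(f) < p^{n-1}(p-1)`
then `ord_p(χ(f)) = μ(f) + λ(f)/(p^{n-1}(p-1))`. Here `K` is a field extension of
`ℤ_p` with a valuation `v` extending the `p`-adic valuation. -/
theorem stmt8 (p : ℕ) [Fact p.Prime] (n : ℕ) (hn : 1 ≤ n)
    (K : Type) [Field K] [Algebra ℤ_[p] K] (v : K → ℚ)
    (hv_mul : ∀ x y : K, x ≠ 0 → y ≠ 0 → v (x * y) = v x + v y)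
    (hv_add : ∀ x y : K, x ≠ 0 → y ≠ 0 → x + y ≠ 0 → min (v x) (v y) ≤ v (x + y))
    (hv_coe : ∀ c : ℤ_[p], c ≠ 0 → v (algebraMap ℤ_[p] K c) = (c.valuation : ℚ))
    (γ : Gn p n) (hγ : ∀ x : Gn p n, x ∈ Subgroup.zpowers γ)
    (χ : Gn p n →* K) (hχ : IsPrimitiveRoot (χ γ) (p ^ n))
    (f : Lam p n) (m l : ℕ)
    (hm : (p : Lam p n) ^ m ∣ f ∧ ¬ (p : Lam p n) ^ (m+1) ∣ f)
    (f' : Lam p n) (hf' : f = (p : Lam p n) ^ m * f')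
    (hl : red p n f' ∈ (augIdeal p n) ^ l ∧ red p n f' ∉ (augIdeal p n) ^ (l+1))
    (hlt : l < p ^ (n-1) * (p - 1)) :
    v ((MonoidAlgebra.lift ℤ_[p] K (Gn p n)) χ f) =
      (m : ℚ) + (l : ℚ) / ((p : ℚ) ^ (n-1) * ((p : ℚ) - 1)) := by
  classical
  have hp' : p.Prime := Fact.out
  have hp2 : 2 ≤ p := hp'.two_le
  have hNpos : 0 < p ^ n := pow_pos hp'.pos n
  have hN1 : 1 < p ^ n := by
    calc 1 < 2 := one_lt_two
    _ ≤ 2 ^ n := Nat.le_self_pow (by omega) 2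
    _ ≤ p ^ n := Nat.pow_le_pow_left hp2 n
  set d : ℕ := p ^ (n-1) * (p-1) with hd
  have hdpos : 0 < d := Nat.mul_pos (pow_pos hp'.pos _) (by omega)
  have hldd : l < d := hlt
  set ζ : K := χ γ with hζdef
  -- p-adic valuation of p in K
  have hvp1 : v ((p:ℕ) : K) = 1 := by
    have hcast : ((p:ℕ) : K) = algebraMap ℤ_[p] K ((p:ℕ) : ℤ_[p]) :=
      (map_natCast (algebraMap ℤ_[p] K) p).symm
    have hpne : ((p:ℕ) : ℤ_[p]) ≠ 0 := Nat.cast_ne_zero.mpr hp'.ne_zero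
    rw [hcast, hv_coe _ hpne, PadicInt.valuation_p]
    norm_num
  obtain ⟨hpK0, hvζ0⟩ := v_zeta_sub_one v hv_mul hv_add (v_one v hv_mul) (v_pow v hv_mul)
    (v_prod v hv_mul) (v_sum_ge v hv_mul hv_add) p hp' n hn hχ hvp1
  have hζne1 : ζ ≠ 1 := hχ.ne_one hN1
  have hζ1ne : ζ - 1 ≠ 0 := sub_ne_zero_of_ne hζne1
  have h1ζne : (1:K) - ζ ≠ 0 := sub_ne_zero_of_ne (Ne.symm hζne1)
  set e : ℚ := 1 / (d:ℚ) with he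
  have hvζ' : v (ζ - 1) = e := by
    have hrw : ζ - 1 = -((1:K) - ζ) := by ring
    rw [hrw, v_neg v hv_mul _ h1ζne, hvζ0]
  have hepos : 0 < e := by
    rw [he]
    have : (0:ℚ) < (d:ℚ) := by exact_mod_cast hdpos
    positivity
  have hle1 : (l:ℚ) * e < 1 := by
    rw [he, mul_one_div, div_lt_one (by exact_mod_cast hdpos)]
    exact_mod_cast hldd
  -- group facts
  haveI : NeZero (p ^ n) := ⟨hNpos.ne'⟩
  have hcard : Fintype.card (Gn p n) = p ^ n := by
    rw [Fintype.card_multiplicative, ZMod.card]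
  have hσN : ∀ σ : Gn p n, σ ^ (p ^ n) = 1 := fun σ => by
    have hcp := pow_card_eq_one (G := Gn p n) (x := σ)
    rwa [hcard] at hcp
  have γpow : ∀ x : Gn p n, ∃ k : ℕ, γ ^ k = x := by
    intro x
    have hmem := mem_powers_iff_mem_zpowers.mpr (hγ x)
    exact (Submonoid.mem_powers_iff _ _).mp hmem
  -- character values
  set χL := (MonoidAlgebra.lift ℤ_[p] K (Gn p n)) χ with hχLdef
  have hχσ : ∀ σ : Gn p n, χ σ ≠ 0 ∧ v (χ σ) = 0 := by
    intro σ
    have hpow : (χ σ) ^ (p ^ n) = 1 := by rw [← map_pow, hσN σ, map_one]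
    exact ⟨root_ne_zero _ _ hNpos hpow,
      v_root_zero v hv_mul hv_add (v_one v hv_mul) (v_pow v hv_mul) _ _ hNpos hpow⟩
  have hvalnn : ∀ h : Lam p n, χL h = 0 ∨ 0 ≤ v (χL h) := by
    intro h
    rw [hχLdef, MonoidAlgebra.lift_apply, Finsupp.sum]
    refine v_sum_ge v hv_mul hv_add 0 h.coeff.support _ ?_
    intro σ hσ
    rw [Algebra.smul_def]
    by_cases h0 : algebraMap ℤ_[p] K (h.coeff σ) = 0
    · left; rw [h0, zero_mul]
    · right
      rw [hv_mul _ _ h0 (hχσ σ).1, (hχσ σ).2, add_zero,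
        hv_coe _ (Finsupp.mem_support_iff.mp hσ)]
      exact Nat.cast_nonneg _
  -- decomposition of f'
  set T : Lam p n := MonoidAlgebra.of ℤ_[p] (Gn p n) γ - 1 with hT
  set t : MonoidAlgebra (ZMod p) (Gn p n) := MonoidAlgebra.of (ZMod p) (Gn p n) γ - 1 with ht
  have haug : augIdeal p n = Ideal.span {t} := augIdeal_eq p n γ γpow
  obtain ⟨w, hw⟩ : ∃ w, red p n f' = t ^ l * w := by
    have h1 := hl.1
    rw [haug, Ideal.span_singleton_pow, Ideal.mem_span_singleton] at h1
    exact h1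
  set W : Lam p n := MonoidAlgebra.ofCoeff (Finsupp.mapRange (fun a : ZMod p => ((a.val : ℕ) : ℤ_[p]))
    (by simp) w.coeff) with hWdef
  have hredW : red p n W = w := by
    rw [red, hWdef]
    ext σ
    rw [MonoidAlgebra.coeff_ofCoeff, MonoidAlgebra.coeff_ofCoeff, Finsupp.mapRange_apply, Finsupp.mapRange_apply, map_natCast PadicInt.toZMod,
      ZMod.natCast_val, ZMod.cast_id]
  have hredT : redHom p n T = t := by
    rw [hT, map_sub, map_one, red_ofγ]
  have hred0 : red p n (f' - T ^ l * W) = 0 := by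
    rw [red_eq, map_sub, map_mul, map_pow, hredT, ← red_eq p n W, hredW, ← red_eq p n f',
      hw, sub_self]
  obtain ⟨U, hU⟩ := ker_red p n _ hred0
  have hf'dec : f' = T ^ l * W + ((p:ℕ) : Lam p n) * U := by linear_combination hU
  -- the unit coefficient
  set a : ℤ_[p] := W.coeff.sum (fun _ b => b) with hadef
  have hta : PadicInt.toZMod a ≠ 0 := by
    intro h0
    apply hl.2
    have hεw : (MonoidAlgebra.lift (ZMod p) (ZMod p) (Gn p n)) 1 w = 0 := by
      rw [← hredW, red_eps, eps_apply, ← hadef, h0]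
    have hwI : w ∈ augIdeal p n := by
      rw [mem_augIdeal_iff, ← eps_apply p n (ZMod p) w]
      exact hεw
    rw [haug, Ideal.mem_span_singleton] at hwI
    obtain ⟨w', hw'⟩ := hwI
    rw [haug, Ideal.span_singleton_pow, Ideal.mem_span_singleton]
    exact ⟨w', by rw [hw, hw', pow_succ]; ring⟩
  have hane : a ≠ 0 := by
    intro h; rw [h, map_zero] at hta; exact hta rfl
  have haunit : IsUnit a := by
    refine IsLocalRing.notMem_maximalIdeal.mp fun hmem => hta ?_
    rw [← PadicInt.ker_toZMod] at hmem
    exact hmem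
  obtain ⟨w2, hw2⟩ := T_dvd_sub p n ℤ_[p] γ γpow W
  rw [← hadef, ← hT] at hw2
  have hWdec : W = MonoidAlgebra.single 1 a + T * w2 := by linear_combination hw2
  have hfdec : f' = T ^ l * MonoidAlgebra.single 1 a
      + (T ^ (l+1) * w2 + ((p:ℕ) : Lam p n) * U) := by
    rw [hf'dec, hWdec, pow_succ]
    ring
  -- apply the character
  have hχLT : χL T = ζ - 1 := by
    rw [hT, map_sub, map_one, hχLdef, MonoidAlgebra.lift_of, hζdef]
  have hχLa : χL (MonoidAlgebra.single 1 a) = algebraMap ℤ_[p] K a := by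
    rw [hχLdef, MonoidAlgebra.lift_single, map_one, Algebra.smul_def, mul_one]
  have happ : χL f' = algebraMap ℤ_[p] K a * (ζ - 1) ^ l
      + ((ζ - 1) ^ (l+1) * χL w2 + ((p:ℕ) : K) * χL U) := by
    rw [hfdec, map_add, map_add, map_mul, map_mul, map_mul, map_pow, map_pow, map_natCast,
      hχLT, hχLa]
    ring
  -- valuation of the main term
  obtain ⟨b, hab⟩ := isUnit_iff_exists_inv.mp haunit
  have hbne : b ≠ 0 := by
    intro h; rw [h, mul_zero] at hab; exact zero_ne_one hab
  have halgab : algebraMap ℤ_[p] K a * algebraMap ℤ_[p] K b = 1 := by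
    rw [← map_mul, hab, map_one]
  have halgane : algebraMap ℤ_[p] K a ≠ 0 := left_ne_zero_of_mul_eq_one halgab
  have halgbne : algebraMap ℤ_[p] K b ≠ 0 := right_ne_zero_of_mul_eq_one halgab
  have hvalga : v (algebraMap ℤ_[p] K a) = 0 := by
    have hsum0 : v (algebraMap ℤ_[p] K a) + v (algebraMap ℤ_[p] K b) = 0 := by
      rw [← hv_mul _ _ halgane halgbne, halgab, v_one v hv_mul]
    have h1 : (0:ℚ) ≤ v (algebraMap ℤ_[p] K a) := by
      rw [hv_coe _ hane]; exact Nat.cast_nonneg _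
    have h2 : (0:ℚ) ≤ v (algebraMap ℤ_[p] K b) := by
      rw [hv_coe _ hbne]; exact Nat.cast_nonneg _
    linarith
  set x : K := algebraMap ℤ_[p] K a * (ζ - 1) ^ l with hxdef
  have hxne : x ≠ 0 := mul_ne_zero halgane (pow_ne_zero _ hζ1ne)
  have hvx : v x = l * e := by
    rw [hxdef, hv_mul _ _ halgane (pow_ne_zero _ hζ1ne), hvalga,
      v_pow v hv_mul _ hζ1ne l, hvζ', zero_add]
  set y1 : K := (ζ - 1) ^ (l+1) * χL w2 with hy1def
  set y2 : K := ((p:ℕ) : K) * χL U with hy2def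
  have hy1 : y1 = 0 ∨ (l:ℚ) * e < v y1 := by
    by_cases hz : χL w2 = 0
    · left; rw [hy1def, hz, mul_zero]
    · right
      have hnn := (hvalnn w2).resolve_left hz
      rw [hy1def, hv_mul _ _ (pow_ne_zero _ hζ1ne) hz, v_pow v hv_mul _ hζ1ne, hvζ']
      push_cast
      nlinarith [hepos]
  have hy2 : y2 = 0 ∨ (l:ℚ) * e < v y2 := by
    by_cases hz : χL U = 0
    · left; rw [hy2def, hz, mul_zero]
    · right
      have hnn := (hvalnn U).resolve_left hz
      rw [hy2def, hv_mul _ _ hpK0 hz, hvp1]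
      linarith
  have hy := v_add_gt v hv_mul hv_add ((l:ℚ) * e) y1 y2 hy1 hy2
  have hy' : y1 + y2 = 0 ∨ v x < v (y1 + y2) := by
    rcases hy with h | h
    · exact Or.inl h
    · right; rw [hvx]; exact h
  have hmain := v_add_eq v hv_mul hv_add x (y1 + y2) hxne hy'
  have hχLf'ne : χL f' ≠ 0 := by rw [happ]; exact hmain.1
  have hvχLf' : v (χL f') = (l:ℚ) * e := by rw [happ, hmain.2, hvx]
  -- final computation
  have hχLf : χL f = ((p:ℕ) : K) ^ m * χL f' := by
    rw [hf', map_mul, map_pow, map_natCast]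
  have hfinal : v (χL f) = (m:ℚ) + (l:ℚ) * e := by
    rw [hχLf, hv_mul _ _ (pow_ne_zero _ hpK0) hχLf'ne, v_pow v hv_mul _ hpK0, hvp1,
      hvχLf', mul_one]
  rw [hfinal]
  congr 1
  rw [he, hd]
  have hcast : ((p ^ (n-1) * (p-1) : ℕ) : ℚ) = (p:ℚ) ^ (n-1) * ((p:ℚ) - 1) := by
    push_cast [Nat.cast_sub hp'.one_le]
    ring
  rw [hcast, mul_one_div]
end

section
/- Let π: Λ_n → Λ_{n-1} be the natural projection. For nonzero g ∈ Λ_n with μ(π(g)) = μ(g), one has λ(π(g)) = λ(g). -/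
open MonoidAlgebra Finset

/-! ### Auxiliary material -/

section Aux

variable (p : ℕ) [Fact p.Prime] (k n : ℕ)

/-- Abbreviation for `𝔽_p[G_k]`. -/
noncomputable abbrev Ak := MonoidAlgebra (ZMod p) (Gn p k)

/-- The standard generator `γ` of `G_k` inside `𝔽_p[G_k]`. -/
noncomputable def gam : Ak p k := MonoidAlgebra.of (ZMod p) (Gn p k) (Multiplicative.ofAdd 1)

instance : NeZero (p ^ k) := ⟨pow_ne_zero _ (Fact.out (p := p.Prime)).ne_zero⟩

instance : CharP (Ak p k) p :=
  charP_of_injective_ringHom (f := MonoidAlgebra.singleOneRingHom (R := ZMod p) (M := Gn p k))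
    (fun a b h => by
      have h' : (Finsupp.single (1 : Gn p k) a : (Gn p k) →₀ ZMod p) = Finsupp.single 1 b :=
        congrArg MonoidAlgebra.coeff h
      simpa using DFunLike.congr_fun h' 1) p

theorem gam_pow (v : ℕ) :
    gam p k ^ v = MonoidAlgebra.of (ZMod p) (Gn p k) (Multiplicative.ofAdd (v : ZMod (p^k))) := by
  rw [gam, ← map_pow]
  congr 1
  rw [← ofAdd_nsmul]
  congr 1
  simp [nsmul_eq_mul]

theorem of_eq_gam_pow (a : Gn p k) :
    MonoidAlgebra.of (ZMod p) (Gn p k) a = gam p k ^ (Multiplicative.toAdd a).val := by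
  rw [gam_pow]
  congr 1
  rw [ZMod.natCast_val, ZMod.cast_id, ofAdd_toAdd]

theorem gam_nilpotent : (gam p k - 1) ^ (p ^ k) = (0 : Ak p k) := by
  rw [sub_pow_char_pow, one_pow, gam_pow, ZMod.natCast_self]
  simp [MonoidAlgebra.one_def]

theorem augIdeal_eq_span : augIdeal p k = Ideal.span {gam p k - 1} := by
  apply le_antisymm
  · intro f hf
    have hf0 : (MonoidAlgebra.lift (ZMod p) (ZMod p) (Gn p k)) 1 f = 0 := hf
    rw [MonoidAlgebra.lift_apply] at hf0
    simp only [MonoidHom.one_apply, smul_eq_mul, mul_one, Finsupp.sum] at hf0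
    have h1 : ∑ a ∈ f.coeff.support, f.coeff a • (MonoidAlgebra.of (ZMod p) (Gn p k) a) = f := by
      have h2 := MonoidAlgebra.sum_coeff_single f
      rw [Finsupp.sum] at h2
      calc ∑ a ∈ f.coeff.support, f.coeff a • (MonoidAlgebra.of (ZMod p) (Gn p k) a)
          = ∑ a ∈ f.coeff.support, MonoidAlgebra.single a (f.coeff a) := Finset.sum_congr rfl fun a _ => by
            rw [MonoidAlgebra.of_apply, MonoidAlgebra.smul_single', mul_one]
        _ = f := h2
    have hrep : f = ∑ a ∈ f.coeff.support, f.coeff a • (MonoidAlgebra.of (ZMod p) (Gn p k) a - 1) := by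
      simp only [smul_sub, Finset.sum_sub_distrib, ← Finset.sum_smul, hf0, h1, zero_smul,
        sub_zero]
    rw [hrep]
    refine Ideal.sum_mem _ fun a _ => Submodule.smul_of_tower_mem _ _ ?_
    rw [of_eq_gam_pow]
    exact Ideal.mem_span_singleton.mpr (by simpa using sub_dvd_pow_sub_pow (gam p k) 1 _)
  · rw [Ideal.span_le]
    intro x hx
    rw [Set.mem_singleton_iff] at hx
    subst hx
    show _ ∈ RingHom.ker _
    rw [RingHom.mem_ker]
    simp [gam, MonoidAlgebra.lift_of]

theorem augIdeal_pow_eq (l : ℕ) : (augIdeal p k) ^ l = Ideal.span {(gam p k - 1) ^ l} := by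
  rw [augIdeal_eq_span, Ideal.span_singleton_pow]

/-- The reduction of `piMap` to `𝔽_p`-coefficients. -/
noncomputable def Rpi : Ak p (n+1) →+* Ak p n :=
  MonoidAlgebra.mapDomainRingHom (ZMod p) (projHom p n)

theorem Rpi_apply (z : Ak p (n+1)) : Rpi p n z = MonoidAlgebra.mapDomain (projHom p n) z := rfl

theorem projHom_ofAdd (x : ZMod (p^(n+1))) :
    projHom p n (Multiplicative.ofAdd x) =
      Multiplicative.ofAdd ((ZMod.castHom (pow_dvd_pow p (Nat.le_succ n)) (ZMod (p^n))) x) := rfl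

theorem Rpi_gam : Rpi p n (gam p (n+1)) = gam p n := by
  rw [gam, MonoidAlgebra.of_apply, Rpi_apply, MonoidAlgebra.mapDomain_single, projHom_ofAdd, map_one]
  rfl

/-- A set-theoretic section of `projHom`. -/
noncomputable def sec : Gn p n → Gn p (n+1) :=
  fun b => Multiplicative.ofAdd (((Multiplicative.toAdd b).val : ZMod (p^(n+1))))

theorem proj_sec (b : Gn p n) : projHom p n (sec p n b) = b := by
  rw [sec, projHom_ofAdd, map_natCast, ZMod.natCast_val, ZMod.cast_id, ofAdd_toAdd]

theorem Rpi_red (f : Lam p (n+1)) : red p n (piMap p n f) = Rpi p n (red p (n+1) f) := by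
  rw [Rpi_apply, red, red]
  show MonoidAlgebra.ofCoeff (Finsupp.mapRange PadicInt.toZMod (map_zero _)
      (Finsupp.mapDomain (projHom p n) f.coeff)) =
    MonoidAlgebra.ofCoeff (Finsupp.mapDomain (projHom p n)
      (Finsupp.mapRange PadicInt.toZMod (map_zero _) f.coeff))
  rw [Finsupp.mapDomain_mapRange _ _ _ _ (map_add PadicInt.toZMod)]

/-- Kernel elements of `Rpi` lie in the span of `(γ-1)^{p^n}`. -/
theorem ker_Rpi_mem (z : Ak p (n+1)) (hz : Rpi p n z = 0) :
    z ∈ Ideal.span {(gam p (n+1) - 1) ^ (p ^ n)} := by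
  have hgen : (gam p (n+1) - 1) ^ (p ^ n) = gam p (n+1) ^ (p ^ n) - 1 := by
    rw [sub_pow_char_pow, one_pow]
  have hmap : Finsupp.mapDomain (fun a => sec p n (projHom p n a)) z.coeff = 0 := by
    rw [show (fun a => sec p n (projHom p n a)) = sec p n ∘ projHom p n from rfl,
      Finsupp.mapDomain_comp,
      show Finsupp.mapDomain (projHom p n) z.coeff = 0 from congrArg MonoidAlgebra.coeff hz,
      Finsupp.mapDomain_zero]
  have hz' : z = ∑ a ∈ z.coeff.support,
      (MonoidAlgebra.single a (z.coeff a) - MonoidAlgebra.single (sec p n (projHom p n a)) (z.coeff a)) := by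
    rw [Finset.sum_sub_distrib]
    have e1 : ∑ a ∈ z.coeff.support, MonoidAlgebra.single a (z.coeff a) = z := by
      have h2 := MonoidAlgebra.sum_coeff_single z
      rwa [Finsupp.sum] at h2
    have e2 : ∑ a ∈ z.coeff.support, MonoidAlgebra.single (sec p n (projHom p n a)) (z.coeff a)
        = MonoidAlgebra.ofCoeff (Finsupp.mapDomain (fun a => sec p n (projHom p n a)) z.coeff) := by
      apply MonoidAlgebra.coeff_injective
      rw [MonoidAlgebra.coeff_sum, MonoidAlgebra.coeff_ofCoeff, Finsupp.mapDomain, Finsupp.sum]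
      rfl
    rw [e1, e2, hmap, MonoidAlgebra.ofCoeff_zero, sub_zero]
  rw [hz']
  refine Ideal.sum_mem _ fun a _ => ?_
  set b' := sec p n (projHom p n a) with hb'
  have hpib' : projHom p n b' = projHom p n a := proj_sec p n _
  set kk := a * b'⁻¹ with hkk
  have hk : projHom p n kk = 1 := by
    rw [hkk, map_mul, map_inv, hpib', mul_inv_cancel]
  have hdvd : (p ^ n) ∣ (Multiplicative.toAdd kk).val := by
    have h1 : Multiplicative.ofAdd
        ((ZMod.castHom (pow_dvd_pow p (Nat.le_succ n)) (ZMod (p^n))) (Multiplicative.toAdd kk))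
        = 1 := by
      rw [← projHom_ofAdd, ofAdd_toAdd, hk]
    have h2 : ((Multiplicative.toAdd kk).val : ZMod (p^n)) = 0 := by
      have := congrArg Multiplicative.toAdd h1
      rw [toAdd_ofAdd, toAdd_one] at this
      rw [ZMod.natCast_val]
      rwa [ZMod.castHom_apply] at this
    exact (ZMod.natCast_eq_zero_iff _ _).mp h2
  obtain ⟨j, hj⟩ := hdvd
  have hkmem : (MonoidAlgebra.single kk 1 : Ak p (n+1)) - 1 ∈
      Ideal.span {(gam p (n+1) - 1) ^ (p ^ n)} := by
    have : (MonoidAlgebra.single kk 1 : Ak p (n+1)) = (gam p (n+1) ^ (p ^ n)) ^ j := by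
      rw [← MonoidAlgebra.of_apply, of_eq_gam_pow, hj, pow_mul]
    rw [this, hgen]
    exact Ideal.mem_span_singleton.mpr
      (by simpa using sub_dvd_pow_sub_pow (gam p (n+1) ^ (p ^ n)) 1 j)
  have hfactor : (MonoidAlgebra.single a (z.coeff a) : Ak p (n+1)) - MonoidAlgebra.single b' (z.coeff a)
      = (MonoidAlgebra.single b' (z.coeff a) : Ak p (n+1)) *
        ((MonoidAlgebra.single kk 1 : Ak p (n+1)) - 1) := by
    rw [mul_sub, mul_one, MonoidAlgebra.single_mul_single, mul_one]
    congr 2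
    rw [hkk, mul_comm a b'⁻¹, mul_inv_cancel_left]
  show (MonoidAlgebra.single a (z.coeff a) : Ak p (n+1)) - MonoidAlgebra.single b' (z.coeff a) ∈ _
  rw [hfactor]
  exact Ideal.mul_mem_left _ _ hkmem

end Aux
theorem red_ne_zero (p : ℕ) [Fact p.Prime] (n : ℕ) (f : Lam p n)
    (h : ¬ (p : Lam p n) ∣ f) : red p n f ≠ 0 := by
  intro h0
  apply h
  classical
  have hpne : (p : ℤ_[p]) ≠ 0 := Nat.cast_ne_zero.mpr (Fact.out (p := p.Prime)).ne_zero
  have hdvd : ∀ a, (p : ℤ_[p]) ∣ f.coeff a := by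
    intro a
    have h1 : (red p n f).coeff a = 0 := by rw [h0]; rfl
    rw [red, MonoidAlgebra.coeff_ofCoeff, Finsupp.mapRange_apply] at h1
    have h2 : f.coeff a ∈ RingHom.ker (PadicInt.toZMod (p := p)) := h1
    rw [PadicInt.ker_toZMod, PadicInt.maximalIdeal_eq_span_p, Ideal.mem_span_singleton] at h2
    exact h2
  set d : ℤ_[p] → ℤ_[p] := fun x => if hx : (p : ℤ_[p]) ∣ x then hx.choose else 0 with hdd
  have hd : ∀ x, (p : ℤ_[p]) ∣ x → x = p * d x := by
    intro x hx
    simp only [hdd, dif_pos hx]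
    exact hx.choose_spec
  have hd0 : d 0 = 0 := by
    have h00 : (0 : ℤ_[p]) = p * d 0 := hd 0 (dvd_zero _)
    exact (mul_eq_zero.mp h00.symm).resolve_left hpne
  set F : Lam p n := MonoidAlgebra.ofCoeff (Finsupp.mapRange d hd0 f.coeff) with hF
  refine ⟨F, ?_⟩
  have hsm : (p : Lam p n) * F = (p : ℤ_[p]) • F := by
    rw [← map_natCast (algebraMap ℤ_[p] (Lam p n)) p, ← Algebra.smul_def]
  have hFa : ∀ a, ((p : ℤ_[p]) • F).coeff a = (p : ℤ_[p]) * d (f.coeff a) := by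
    intro a
    rw [MonoidAlgebra.coeff_smul_apply, hF, MonoidAlgebra.coeff_ofCoeff, Finsupp.mapRange_apply, smul_eq_mul]
  rw [hsm]
  ext a
  rw [hFa a]
  exact hd _ (hdvd a)

/-- If `μ(π(g)) = μ(g)` then `λ(π(g)) = λ(g)`. -/
theorem stmt10 (p : ℕ) [Fact p.Prime] (n : ℕ) (g : Lam p (n+1)) (hg : g ≠ 0)
    (m l : ℕ)
    (hm : (p : Lam p (n+1)) ^ m ∣ g ∧ ¬ (p : Lam p (n+1)) ^ (m+1) ∣ g)
    (hm' : (p : Lam p n) ^ m ∣ piMap p n g ∧ ¬ (p : Lam p n) ^ (m+1) ∣ piMap p n g)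
    (g' : Lam p (n+1)) (hg' : g = (p : Lam p (n+1)) ^ m * g')
    (hl : red p (n+1) g' ∈ (augIdeal p (n+1)) ^ l ∧
      red p (n+1) g' ∉ (augIdeal p (n+1)) ^ (l+1)) :
    red p n (piMap p n g') ∈ (augIdeal p n) ^ l ∧
      red p n (piMap p n g') ∉ (augIdeal p n) ^ (l+1) := by
  have hcomm := Rpi_red p n g'
  have hnd : ¬ (p : Lam p n) ∣ piMap p n g' := by
    rintro ⟨w, hw⟩
    apply hm'.2
    refine ⟨w, ?_⟩
    rw [hg', map_mul, map_pow, map_natCast, hw, ← mul_assoc, ← pow_succ]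
  have hne : Rpi p n (red p (n+1) g') ≠ 0 := by
    rw [← hcomm]; exact red_ne_zero p n _ hnd
  set x := red p (n+1) g' with hx
  set t := gam p (n+1) - 1 with ht
  set s := gam p n - 1 with hs
  have hx1 : x ∈ Ideal.span {t ^ l} := by rw [← augIdeal_pow_eq]; exact hl.1
  have hx2 : x ∉ Ideal.span {t ^ (l+1)} := by rw [← augIdeal_pow_eq]; exact hl.2
  obtain ⟨c, hc⟩ := Ideal.mem_span_singleton.mp hx1
  have hRt : Rpi p n t = s := by rw [ht, map_sub, Rpi_gam, map_one]
  have h1 : Rpi p n x ∈ Ideal.span {s ^ l} := by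
    rw [hc, map_mul, map_pow, hRt]
    exact Ideal.mem_span_singleton.mpr (dvd_mul_right _ _)
  constructor
  · rw [augIdeal_pow_eq, hcomm]; exact h1
  · rw [augIdeal_pow_eq, hcomm]
    intro hmem
    have hlow : l + 1 ≤ p ^ n := by
      by_contra hle
      push_neg at hle
      have hle' : p ^ n ≤ l := Nat.lt_succ_iff.mp hle
      have hs0 : s ^ l = 0 := by
        calc s ^ l = s ^ (p ^ n) * s ^ (l - p ^ n) := by
              rw [← pow_add, Nat.add_sub_cancel' hle']
          _ = 0 := by
              rw [show s ^ (p ^ n) = 0 from gam_nilpotent p n, zero_mul]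
      exact hne (zero_dvd_iff.mp (by
        have := Ideal.mem_span_singleton.mp h1
        rwa [hs0] at this))
    obtain ⟨y, hy⟩ := Ideal.mem_span_singleton.mp hmem
    set yt : Ak p (n+1) := MonoidAlgebra.mapDomain (sec p n) y with hyt
    have hRyt : Rpi p n yt = y := by
      rw [Rpi_apply, hyt]
      apply MonoidAlgebra.coeff_injective
      show Finsupp.mapDomain (projHom p n) (Finsupp.mapDomain (sec p n) y.coeff) = y.coeff
      rw [← Finsupp.mapDomain_comp,
        show ((projHom p n) ∘ sec p n) = id from funext (proj_sec p n), Finsupp.mapDomain_id]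
    have hker : Rpi p n (x - t ^ (l+1) * yt) = 0 := by
      rw [map_sub, map_mul, map_pow, hRt, hRyt, hy, sub_self]
    have hz := ker_Rpi_mem p n _ hker
    have hsub : Ideal.span {t ^ (p ^ n)} ≤ Ideal.span {t ^ (l+1)} := by
      rw [Ideal.span_singleton_le_span_singleton]
      exact pow_dvd_pow t hlow
    apply hx2
    have hxeq : x = (x - t ^ (l+1) * yt) + t ^ (l+1) * yt := by ring
    rw [hxeq]
    exact Ideal.add_mem _ (hsub hz) (Ideal.mem_span_singleton.mpr (dvd_mul_right _ _))
end

section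
/- Let p be a prime and n ≥ 1. Let f, g ∈ Λ_n = Z_p[G_n] with f·g ∈ ξ_n·Λ_n. If μ(f) = 0 and λ(f) < p^{n-1}, then g ∈ ξ_n·Λ_n. -/
open MonoidAlgebra Finset

namespace Stmt12Aux
set_option linter.unusedSectionVars false

open Polynomial

private lemma aux_pow_mod {Mo : Type*} [Monoid Mo] {x : Mo} {N : ℕ} (h : x ^ N = 1) (m : ℕ) :
    x ^ (m % N) = x ^ m := by
  conv_rhs => rw [← Nat.div_add_mod m N, pow_add, pow_mul, h, one_pow, one_mul]

private lemma aux_geom_sum (p : ℕ) [hp : Fact p.Prime] (m : ℕ) :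
    (∑ k ∈ Finset.range p, ((Polynomial.X : (ZMod p)[X]) ^ p ^ m) ^ k)
      = (Polynomial.X - 1) ^ (p ^ m * (p - 1)) := by
  have hX1 : (X : (ZMod p)[X]) - 1 ≠ 0 := by
    simpa using X_sub_C_ne_zero (1 : ZMod p)
  have hXM : ((X : (ZMod p)[X]) ^ p ^ m - 1) = (X - 1) ^ p ^ m := by
    rw [sub_pow_char_pow, one_pow]
  have hexp : p ^ m * (p - 1) + p ^ m = p ^ (m + 1) := by
    have h1 : (p - 1) + 1 = p := Nat.succ_pred_eq_of_pos hp.out.pos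
    rw [← Nat.mul_succ, pow_succ]
    exact congrArg (p ^ m * ·) h1
  apply mul_right_cancel₀ (pow_ne_zero (p ^ m) hX1)
  calc (∑ k ∈ Finset.range p, ((X : (ZMod p)[X]) ^ p ^ m) ^ k) * (X - 1) ^ p ^ m
      = (∑ k ∈ Finset.range p, ((X : (ZMod p)[X]) ^ p ^ m) ^ k) * ((X ^ p ^ m) - 1) := by
        rw [hXM]
    _ = ((X : (ZMod p)[X]) ^ p ^ m) ^ p - 1 := geom_sum_mul _ p
    _ = (X : (ZMod p)[X]) ^ p ^ (m + 1) - 1 ^ p ^ (m + 1) := by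
        rw [← pow_mul, ← pow_succ, one_pow]
    _ = ((X : (ZMod p)[X]) - 1) ^ p ^ (m + 1) := (sub_pow_char_pow _ _ _).symm
    _ = (X - 1) ^ (p ^ m * (p - 1)) * (X - 1) ^ p ^ m := by rw [← pow_add, hexp]

private lemma cyclo_irred (p : ℕ) [hp : Fact p.Prime] (n : ℕ) :
    Irreducible (cyclotomic (p ^ (n + 1)) ℤ_[p]) := by
  have hmonicZ : ((cyclotomic (p ^ (n+1)) ℤ).comp (X + 1)).Monic := by
    simpa using (cyclotomic.monic (p ^ (n+1)) ℤ).comp_X_add_C 1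
  set q : ℤ_[p][X] := (cyclotomic (p ^ (n+1)) ℤ_[p]).comp (X + 1) with hq
  have hmap : q = ((cyclotomic (p ^ (n+1)) ℤ).comp (X + 1)).map (Int.castRingHom ℤ_[p]) := by
    rw [Polynomial.map_comp, map_cyclotomic]
    simp [hq]
  have hmonic : q.Monic := by
    simpa [hq] using (cyclotomic.monic (p ^ (n+1)) ℤ_[p]).comp_X_add_C 1
  have hdegZ : ((cyclotomic (p ^ (n+1)) ℤ).comp (X + 1)).natDegree = (p ^ (n+1)).totient := by
    rw [natDegree_comp, show (X + 1 : ℤ[X]) = X + C 1 by simp, natDegree_X_add_C, mul_one,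
      natDegree_cyclotomic]
  have hdeg : q.natDegree = (p ^ (n+1)).totient := by
    rw [hq, natDegree_comp, show (X + 1 : ℤ_[p][X]) = X + C 1 by simp, natDegree_X_add_C, mul_one,
      natDegree_cyclotomic]
  have hEZ := cyclotomic_prime_pow_comp_X_add_one_isEisensteinAt (p := p) n
  have hprime : (Ideal.span {(p : ℤ_[p])}).IsPrime := by
    rw [← PadicInt.maximalIdeal_eq_span_p]
    infer_instance
  have hE : q.IsEisensteinAt (Ideal.span {(p : ℤ_[p])}) := by
    constructor
    · rw [hmonic.leadingCoeff]
      intro h1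
      exact hprime.ne_top (Ideal.eq_top_of_isUnit_mem _ h1 isUnit_one)
    · intro i hi
      rw [hmap, Polynomial.coeff_map]
      have hi' : i < ((cyclotomic (p ^ (n+1)) ℤ).comp (X + 1)).natDegree := by
        rw [hdegZ, ← hdeg]; exact hi
      have hm := hEZ.mem hi'
      rw [Ideal.submodule_span_eq, Ideal.mem_span_singleton] at hm
      rw [Ideal.mem_span_singleton]
      obtain ⟨c, hc⟩ := hm
      exact ⟨(c : ℤ_[p]), by rw [hc]; simp⟩
    · have h0 : q.coeff 0 = (p : ℤ_[p]) := by
        rw [hq, coeff_zero_eq_eval_zero, eval_comp]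
        simp [eval_one_cyclotomic_prime_pow]
      rw [h0, Ideal.span_singleton_pow, Ideal.mem_span_singleton]
      intro hdvd
      obtain ⟨c, hc⟩ := hdvd
      have hp0 : (p : ℤ_[p]) ≠ 0 := PadicInt.prime_p.ne_zero
      have h1 : (1 : ℤ_[p]) = p * c := by
        apply mul_left_cancel₀ hp0
        rw [mul_one, ← mul_assoc, ← sq]
        exact hc
      exact PadicInt.prime_p.not_isUnit (IsUnit.of_mul_eq_one _ h1.symm)
  have hirr_q : Irreducible q := by
    refine hE.irreducible hprime hmonic.isPrimitive ?_
    rw [hdeg]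
    exact Nat.totient_pos.mpr (pow_pos hp.out.pos _)
  have hqe : q = (algEquivAevalXAddC (1 : ℤ_[p])) (cyclotomic (p ^ (n+1)) ℤ_[p]) := by
    rw [hq, algEquivAevalXAddC_apply, show (X + 1 : ℤ_[p][X]) = X + C 1 by simp, comp_eq_aeval]
  rw [hqe] at hirr_q
  exact (MulEquiv.irreducible_iff (algEquivAevalXAddC (1 : ℤ_[p]))).mp hirr_q

variable (p : ℕ) [hp : Fact p.Prime] (n : ℕ)

private lemma instN : NeZero (p ^ (n + 1)) := ⟨(pow_pos hp.out.pos _).ne'⟩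

private lemma instN1 : Fact (1 < p ^ (n + 1)) := ⟨Nat.one_lt_pow (Nat.succ_ne_zero n) hp.out.one_lt⟩

/-- The canonical generator of `G_{n+1}`. -/
private noncomputable def g0 : Gn p (n+1) := Multiplicative.ofAdd (1 : ZMod (p ^ (n+1)))

private lemma g0_pow (j : ℕ) :
    (g0 p n) ^ j = Multiplicative.ofAdd ((j : ZMod (p ^ (n+1)))) := by
  rw [g0, ← ofAdd_nsmul]
  congr 1
  simp [nsmul_eq_mul]

private lemma g0_pow_val (σ : Gn p (n+1)) :
    (g0 p n) ^ (Multiplicative.toAdd σ).val = σ := by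
  haveI := instN p n
  rw [g0_pow, ZMod.natCast_val, ZMod.cast_id]
  rfl

/-- The evaluation map `ℤ_p[X] → Λ_{n+1}`, `X ↦ g0`. -/
private noncomputable def Psi : ℤ_[p][X] →ₐ[ℤ_[p]] Lam p (n+1) :=
  aeval (MonoidAlgebra.of ℤ_[p] (Gn p (n+1)) (g0 p n))

private lemma aeval_C_mul_X_pow {k : Type*} [CommSemiring k] (c : k) (v : ℕ) :
    aeval (MonoidAlgebra.of k (Gn p (n+1)) (g0 p n)) (C c * X ^ v)
      = MonoidAlgebra.single ((g0 p n) ^ v) c := by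
  rw [map_mul, aeval_C, aeval_X_pow, ← map_pow, ← Algebra.smul_def, MonoidAlgebra.of_apply,
    MonoidAlgebra.smul_single', mul_one]

private lemma Psi_surj : Function.Surjective (Psi p n) := by
  intro a
  induction a using MonoidAlgebra.induction_linear with
  | zero => exact ⟨0, map_zero _⟩
  | add f g hf hg =>
    obtain ⟨P, hP⟩ := hf
    obtain ⟨Q, hQ⟩ := hg
    exact ⟨P + Q, by rw [map_add, hP, hQ]⟩
  | single σ c =>
    refine ⟨C c * X ^ (Multiplicative.toAdd σ).val, ?_⟩
    rw [Psi, aeval_C_mul_X_pow, g0_pow_val]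

private lemma xi_eq : xi p (n+1) = Psi p n (cyclotomic (p ^ (n+1)) ℤ_[p]) := by
  haveI := instN p n
  have hMpos : 0 < p ^ n := pow_pos hp.out.pos n
  rw [Psi, cyclotomic_prime_pow_eq_geom_sum hp.out, map_sum]
  rw [xi]
  refine Finset.sum_nbij' (fun σ => (Multiplicative.toAdd σ).val / p ^ n)
    (fun k => (g0 p n) ^ (p ^ n * k)) ?_ ?_ ?_ ?_ ?_
  · -- maps into range p
    intro σ hσ
    rw [Finset.mem_filter] at hσ
    have hdvd : p ^ n ∣ (Multiplicative.toAdd σ).val := by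
      have h1 : (g0 p n) ^ ((Multiplicative.toAdd σ).val * p) = 1 := by
        rw [pow_mul, g0_pow_val]
        exact hσ.2
      rw [g0_pow] at h1
      have h2 : (((Multiplicative.toAdd σ).val * p : ℕ) : ZMod (p ^ (n+1))) = 0 := by
        have := congrArg Multiplicative.toAdd h1
        simpa using this
      rw [ZMod.natCast_eq_zero_iff] at h2
      have h3 : p ^ n * p ∣ (Multiplicative.toAdd σ).val * p := by
        rw [← pow_succ]
        exact h2
      exact (Nat.mul_dvd_mul_iff_right hp.out.pos).mp h3
    rw [Finset.mem_range, Nat.div_lt_iff_lt_mul hMpos]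
    calc (Multiplicative.toAdd σ).val < p ^ (n+1) := ZMod.val_lt _
      _ = p * p ^ n := by rw [pow_succ, mul_comm]
  · -- maps into filter
    intro k hk
    rw [Finset.mem_filter]
    refine ⟨Finset.mem_univ _, ?_⟩
    rw [← pow_mul, g0_pow]
    have : ((p ^ n * k * p : ℕ) : ZMod (p ^ (n+1))) = 0 := by
      rw [ZMod.natCast_eq_zero_iff, pow_succ]
      exact ⟨k, by ring⟩
    rw [this]
    rfl
  · -- left inverse
    intro σ hσ
    rw [Finset.mem_filter] at hσ
    have hdvd : p ^ n ∣ (Multiplicative.toAdd σ).val := by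
      have h1 : (g0 p n) ^ ((Multiplicative.toAdd σ).val * p) = 1 := by
        rw [pow_mul, g0_pow_val]
        exact hσ.2
      rw [g0_pow] at h1
      have h2 : (((Multiplicative.toAdd σ).val * p : ℕ) : ZMod (p ^ (n+1))) = 0 := by
        have := congrArg Multiplicative.toAdd h1
        simpa using this
      rw [ZMod.natCast_eq_zero_iff] at h2
      have h3 : p ^ n * p ∣ (Multiplicative.toAdd σ).val * p := by
        rw [← pow_succ]
        exact h2
      exact (Nat.mul_dvd_mul_iff_right hp.out.pos).mp h3
    rw [Nat.mul_div_cancel' hdvd, g0_pow_val]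
  · -- right inverse
    intro k hk
    rw [Finset.mem_range] at hk
    have hlt : p ^ n * k < p ^ (n + 1) := by
      rw [pow_succ]
      exact (mul_lt_mul_iff_right₀ hMpos).mpr hk
    rw [g0_pow, toAdd_ofAdd, ZMod.val_natCast_of_lt hlt, Nat.mul_div_cancel_left _ hMpos]
  · -- values agree
    intro σ hσ
    rw [Finset.mem_filter] at hσ
    have hdvd : p ^ n ∣ (Multiplicative.toAdd σ).val := by
      have h1 : (g0 p n) ^ ((Multiplicative.toAdd σ).val * p) = 1 := by
        rw [pow_mul, g0_pow_val]
        exact hσ.2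
      rw [g0_pow] at h1
      have h2 : (((Multiplicative.toAdd σ).val * p : ℕ) : ZMod (p ^ (n+1))) = 0 := by
        have := congrArg Multiplicative.toAdd h1
        simpa using this
      rw [ZMod.natCast_eq_zero_iff] at h2
      have h3 : p ^ n * p ∣ (Multiplicative.toAdd σ).val * p := by
        rw [← pow_succ]
        exact h2
      exact (Nat.mul_dvd_mul_iff_right hp.out.pos).mp h3
    rw [map_pow, aeval_X_pow, ← pow_mul, ← map_pow, Nat.mul_div_cancel' hdvd, g0_pow_val]

/-- The target ring `ℤ_p[X]/(Φ_{p^{n+1}})`. -/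
private abbrev Dq := ℤ_[p][X] ⧸ Ideal.span {cyclotomic (p ^ (n+1)) ℤ_[p]}

private noncomputable def uD : Dq p n := Ideal.Quotient.mk _ (X : ℤ_[p][X])

private lemma uD_pow : (uD p n) ^ (p ^ (n+1)) = 1 := by
  have hmem : (X : ℤ_[p][X]) ^ (p ^ (n+1)) - 1 ∈ Ideal.span {cyclotomic (p ^ (n+1)) ℤ_[p]} := by
    rw [Ideal.mem_span_singleton, ← cyclotomic_prime_pow_mul_X_pow_sub_one ℤ_[p] p n]
    exact ⟨_, rfl⟩
  have h := Ideal.Quotient.eq_zero_iff_mem.mpr hmem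
  rw [map_sub, map_pow, map_one, sub_eq_zero] at h
  exact h

private noncomputable def chi : Gn p (n+1) →* Dq p n where
  toFun σ := uD p n ^ (Multiplicative.toAdd σ).val
  map_one' := by
    haveI := instN p n
    show uD p n ^ (Multiplicative.toAdd (1 : Gn p (n+1))).val = 1
    simp [ZMod.val_zero]
  map_mul' σ τ := by
    haveI := instN p n
    show uD p n ^ ((Multiplicative.toAdd σ + Multiplicative.toAdd τ).val) = _
    rw [ZMod.val_add, aux_pow_mod (uD_pow p n), pow_add]

private noncomputable def theta : Lam p (n+1) →ₐ[ℤ_[p]] Dq p n :=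
  MonoidAlgebra.lift ℤ_[p] (Dq p n) (Gn p (n+1)) (chi p n)

private lemma theta_psi (P : ℤ_[p][X]) :
    theta p n (Psi p n P) = Ideal.Quotient.mk (Ideal.span {cyclotomic (p ^ (n+1)) ℤ_[p]}) P := by
  haveI := instN1 p n
  have h : (theta p n).comp (Psi p n)
      = Ideal.Quotient.mkₐ ℤ_[p] (Ideal.span {cyclotomic (p ^ (n+1)) ℤ_[p]}) := by
    apply Polynomial.algHom_ext
    show theta p n (Psi p n X) = _
    rw [Psi, aeval_X, theta, MonoidAlgebra.lift_of]
    show uD p n ^ (Multiplicative.toAdd (g0 p n)).val = _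
    rw [g0]
    show uD p n ^ (1 : ZMod (p ^ (n+1))).val = _
    rw [ZMod.val_one, pow_one]
    rfl
  calc theta p n (Psi p n P) = ((theta p n).comp (Psi p n)) P := rfl
    _ = _ := by rw [h]; rfl

private lemma span_xi_prime : (Ideal.span {xi p (n+1)}).IsPrime := by
  have hΦprime : Prime (cyclotomic (p ^ (n+1)) ℤ_[p]) :=
    (UniqueFactorizationMonoid.irreducible_iff_prime).mp (cyclo_irred p n)
  haveI hspan : (Ideal.span {cyclotomic (p ^ (n+1)) ℤ_[p]}).IsPrime :=
    (Ideal.span_singleton_prime hΦprime.ne_zero).mpr hΦprime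
  have hker : RingHom.ker (theta p n).toRingHom = Ideal.span {xi p (n+1)} := by
    apply le_antisymm
    · intro a ha
      obtain ⟨P, rfl⟩ := Psi_surj p n a
      rw [RingHom.mem_ker] at ha
      have h0 : Ideal.Quotient.mk (Ideal.span {cyclotomic (p ^ (n+1)) ℤ_[p]}) P = 0 := by
        rw [← theta_psi]
        exact ha
      rw [Ideal.Quotient.eq_zero_iff_mem, Ideal.mem_span_singleton] at h0
      obtain ⟨Q, rfl⟩ := h0
      rw [Ideal.mem_span_singleton, map_mul, ← xi_eq]
      exact ⟨_, rfl⟩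
    · rw [Ideal.span_le, Set.singleton_subset_iff]
      show theta p n (xi p (n+1)) = 0
      rw [xi_eq, theta_psi, Ideal.Quotient.eq_zero_iff_mem]
      exact Ideal.mem_span_singleton_self _
  rw [← hker]
  exact RingHom.ker_isPrime _

private lemma red_add (a b : Lam p (n+1)) :
    red p (n+1) (a + b) = red p (n+1) a + red p (n+1) b :=
  congrArg MonoidAlgebra.ofCoeff (Finsupp.mapRange_add (map_add _) a.coeff b.coeff)

private lemma red_psi (P : ℤ_[p][X]) :
    red p (n+1) (Psi p n P)
      = aeval (MonoidAlgebra.of (ZMod p) (Gn p (n+1)) (g0 p n))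
          (P.map (PadicInt.toZMod : ℤ_[p] →+* ZMod p)) := by
  induction P using Polynomial.induction_on' with
  | add P Q hP hQ =>
    rw [map_add, red_add, hP, hQ, Polynomial.map_add, map_add]
  | monomial v c =>
    rw [← C_mul_X_pow_eq_monomial, Psi, aeval_C_mul_X_pow, Polynomial.map_mul,
      Polynomial.map_C, Polynomial.map_pow, Polynomial.map_X, aeval_C_mul_X_pow]
    rw [red]
    exact congrArg MonoidAlgebra.ofCoeff Finsupp.mapRange_single

private lemma sub_one_mem_aug :
    MonoidAlgebra.of (ZMod p) (Gn p (n+1)) (g0 p n) - 1 ∈ augIdeal p (n+1) := by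
  have key : ∀ F : MonoidAlgebra (ZMod p) (Gn p (n+1)) →ₐ[ZMod p] ZMod p,
      F (MonoidAlgebra.of (ZMod p) (Gn p (n+1)) (g0 p n)) = 1 →
      F.toRingHom (MonoidAlgebra.of (ZMod p) (Gn p (n+1)) (g0 p n) - 1) = 0 := by
    intro F hF
    rw [F.toRingHom.map_sub, F.toRingHom.map_one]
    have h2 : F.toRingHom (MonoidAlgebra.of (ZMod p) (Gn p (n+1)) (g0 p n))
        = F (MonoidAlgebra.of (ZMod p) (Gn p (n+1)) (g0 p n)) := rfl
    rw [h2, hF, sub_self]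
  refine RingHom.mem_ker.mpr (key _ ?_)
  rw [MonoidAlgebra.lift_of]
  rfl

private lemma red_mem (f : Lam p (n+1)) (hf : f ∈ Ideal.span {xi p (n+1)}) :
    red p (n+1) f ∈ (augIdeal p (n+1)) ^ (p ^ n * (p - 1)) := by
  rw [Ideal.mem_span_singleton] at hf
  obtain ⟨h, rfl⟩ := hf
  obtain ⟨P, hP⟩ := Psi_surj p n h
  have heq : xi p (n+1) * h = Psi p n (cyclotomic (p ^ (n+1)) ℤ_[p] * P) := by
    rw [map_mul, xi_eq, hP]
  rw [heq, red_psi, Polynomial.map_mul, map_mul, map_cyclotomic]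
  have hcy : aeval (MonoidAlgebra.of (ZMod p) (Gn p (n+1)) (g0 p n))
      (cyclotomic (p ^ (n+1)) (ZMod p))
      = (MonoidAlgebra.of (ZMod p) (Gn p (n+1)) (g0 p n) - 1) ^ (p ^ n * (p - 1)) := by
    rw [cyclotomic_prime_pow_eq_geom_sum hp.out, aux_geom_sum p n, map_pow, map_sub, aeval_X,
      map_one]
  rw [hcy]
  exact Ideal.mul_mem_right _ _ (Ideal.pow_mem_pow (sub_one_mem_aug p n) _)


end Stmt12Aux

/-- If `f·g ∈ ξ·Λ`, `μ(f) = 0` and `λ(f) < p^{n-1}` (here at level `n+1`,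
so the bound is `p^n`), then `g ∈ ξ·Λ`. -/
theorem stmt12 (p : ℕ) [Fact p.Prime] (n : ℕ) (f g : Lam p (n+1))
    (hfg : f * g ∈ Ideal.span {xi p (n+1)})
    (hμ : ¬ (p : Lam p (n+1)) ∣ f) (l : ℕ)
    (hl : red p (n+1) f ∈ (augIdeal p (n+1)) ^ l ∧
      red p (n+1) f ∉ (augIdeal p (n+1)) ^ (l+1))
    (hlt : l < p ^ n) :
    g ∈ Ideal.span {xi p (n+1)} := by
  have hprime := Stmt12Aux.span_xi_prime p n
  rcases hprime.mem_or_mem hfg with hf | hg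
  · exfalso
    apply hl.2
    have hmem := Stmt12Aux.red_mem p n f hf
    have hple : l + 1 ≤ p ^ n * (p - 1) := by
      have h2 : 2 ≤ p := (Fact.out : p.Prime).two_le
      have h3 : p ^ n ≤ p ^ n * (p - 1) := Nat.le_mul_of_pos_right _ (by omega)
      omega
    exact Ideal.pow_le_pow_right hple hmem
  · exact hg
end

section
/- Let p be a prime and suppose (P_n)_{n≥0} is a sequence with P_n ∈ Λ_n = Z_p[G_n] satisfying: P_0, P_1 are units, π_{n+1/n}(P_{n+1}) = a·P_n - ν_{n-1/n}(P_{n-1}) for n ≥ 1 with a ∈ pZ_p, and π_{1/0}(P_1) = u·P_0 with u ∈ Z_p^×. Then μ(P_n) = 0 for all n ≥ 0. -/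
open MonoidAlgebra Finset

lemma projHom_surj (p n : ℕ) : Function.Surjective (projHom p n) := by
  intro σ
  obtain ⟨x, hx⟩ := ZMod.ringHom_surjective (ZMod.castHom (pow_dvd_pow p (Nat.le_succ n)) (ZMod (p^n))) σ.toAdd
  exact ⟨Multiplicative.ofAdd x, by simpa [projHom] using congrArg Multiplicative.ofAdd hx⟩

lemma dvd_iff_coeff (p : ℕ) [Fact p.Prime] (n : ℕ) (f : Lam p n) :
    (p : Lam p n) ∣ f ↔ ∀ τ, (p : ℤ_[p]) ∣ f.coeff τ := by
  have hcast : (p : Lam p n) = algebraMap ℤ_[p] (Lam p n) (p : ℤ_[p]) := (map_natCast _ p).symm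
  constructor
  · rintro ⟨g, rfl⟩ τ
    rw [hcast, ← Algebra.smul_def]
    exact ⟨g.coeff τ, by rw [coeff_smul_apply, smul_eq_mul]⟩
  · intro h
    classical
    set d : ℤ_[p] → ℤ_[p] := fun x => if h : (p:ℤ_[p]) ∣ x then h.choose else 0 with hd
    have hpne : (p : ℤ_[p]) ≠ 0 := by
      exact_mod_cast (Nat.cast_ne_zero (R := ℤ_[p])).mpr (Fact.out : p.Prime).ne_zero
    have hd0 : d 0 = 0 := by
      simp only [hd, dif_pos (dvd_zero _)]
      rcases mul_eq_zero.mp (dvd_zero (p:ℤ_[p])).choose_spec.symm with h1 | h2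
      · exact absurd h1 hpne
      · exact h2
    refine ⟨ofCoeff (Finsupp.mapRange d hd0 f.coeff), ?_⟩
    rw [hcast, ← Algebra.smul_def]
    apply coeff_injective
    ext τ
    rw [coeff_smul_apply, coeff_ofCoeff, Finsupp.mapRange_apply]
    simp only [hd, dif_pos (h τ), smul_eq_mul]
    exact (h τ).choose_spec

lemma nuMap_apply (p : ℕ) [Fact p.Prime] (n : ℕ) (f : Lam p n) (τ : Gn p (n+1)) :
    (nuMap p n f).coeff τ = f.coeff (projHom p n τ) := by
  classical
  rw [nuMap, coeff_sum, Finsupp.finset_sum_apply]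
  simp [coeff_single, Finsupp.single_apply]

set_option synthInstance.maxHeartbeats 1000000 in
lemma p_not_dvd_unit (p : ℕ) [Fact p.Prime] (n : ℕ) (f : Lam p n) (hf : IsUnit f) :
    ¬ (p : Lam p n) ∣ f := by
  intro h
  have h1 : (p : Lam p n) ∣ 1 := h.trans (isUnit_iff_dvd_one.mp hf)
  have h2 := map_dvd (((MonoidAlgebra.lift ℤ_[p] ℤ_[p] (Gn p n)) (1 : Gn p n →* ℤ_[p])).toRingHom) h1
  simp only [map_natCast, map_one] at h2
  exact PadicInt.prime_p.not_unit (isUnit_of_dvd_one h2)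

/-- For a sequence `P_n ∈ Λ_n` with `P_0, P_1` units,
`π(P_{n+2}) = a·P_{n+1} - ν(P_n)` (`a ∈ pℤ_p`) and `π(P_1) = u·P_0`,
one has `μ(P_n) = 0` for all `n`. -/
theorem stmt16 (p : ℕ) [Fact p.Prime] (P : ∀ n, Lam p n)
    (hP0 : IsUnit (P 0)) (hP1 : IsUnit (P 1))
    (a : ℤ_[p]) (ha : (p : ℤ_[p]) ∣ a)
    (hrec : ∀ n : ℕ, piMap p (n+1) (P (n+2)) = a • P (n+1) - nuMap p n (P n))
    (hP10 : ∃ u : ℤ_[p], IsUnit u ∧ piMap p 0 (P 1) = u • P 0) :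
    ∀ n : ℕ, ¬ (p : Lam p n) ∣ P n := by
  have key : ∀ n, ¬(p : Lam p n) ∣ P n ∧ ¬(p : Lam p (n+1)) ∣ P (n+1) := by
    intro n
    induction n with
    | zero => exact ⟨p_not_dvd_unit p 0 _ hP0, p_not_dvd_unit p 1 _ hP1⟩
    | succ n ih =>
      refine ⟨ih.2, ?_⟩
      intro hdvd
      apply ih.1
      have h1 : (p : Lam p (n+1)) ∣ piMap p (n+1) (P (n+2)) := by
        have := map_dvd (piMap p (n+1)) hdvd
        rwa [map_natCast] at this
      rw [hrec n] at h1
      have h2 : (p : Lam p (n+1)) ∣ a • P (n+1) := by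
        obtain ⟨c, rfl⟩ := ha
        refine ⟨algebraMap ℤ_[p] (Lam p (n+1)) c * P (n+1), ?_⟩
        rw [Algebra.smul_def, map_mul, map_natCast, mul_assoc]
      have h3 := dvd_sub h2 h1
      rw [sub_sub_cancel] at h3
      rw [dvd_iff_coeff] at h3 ⊢
      intro σ
      obtain ⟨τ, rfl⟩ := projHom_surj p n σ
      have := h3 τ
      rwa [nuMap_apply] at this
  exact fun n => (key n).1
end

section
/- Let (P_n) be as above (P_0, P_1 units in Λ_0, Λ_1; π_{n+1/n}(P_{n+1}) = a·P_n - ν_{n-1/n}(P_{n-1}) with a ∈ pZ_p). Set J_n = (P_n, ν_{n-1/n}(P_{n-1})) ⊆ Λ_n for n ≥ 1 and J_0 = (P_0). Then ν_{n-1/n}(J_{n-1}) ⊆ J_n, and there is a short exact sequence of Z_p-modules 0 → Λ_{n-1}/J_{n-1} → Λ_n/J_n → Z_p[μ_{p^n}]/(χ(P_n)) → 0, where the first map is induced by ν_{n-1/n} and the second by a character χ of G_n of exact order p^n. -/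
open MonoidAlgebra Finset

namespace Stmt18Aux

variable (p : ℕ) [Fact p.Prime] (n : ℕ)

instance (m : ℕ) : NeZero (p ^ m) := ⟨pow_ne_zero _ (Nat.Prime.ne_zero Fact.out)⟩

noncomputable def secFun (σ : Gn p n) : Gn p (n+1) :=
  Multiplicative.ofAdd (((Multiplicative.toAdd σ).val : ℕ) : ZMod (p ^ (n+1)))

lemma proj_sec (σ : Gn p n) : projHom p n (secFun p n σ) = σ := by
  simp [projHom, secFun]

lemma projHom_surjective : Function.Surjective (projHom p n) :=
  fun σ => ⟨secFun p n σ, proj_sec p n σ⟩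

lemma ker_iff (τ : Gn p (n+1)) : τ ^ p = 1 ↔ projHom p n τ = 1 := by
  simp only [projHom, AddMonoidHom.toMultiplicative_apply_apply, RingHom.toAddMonoidHom_eq_coe,
    AddMonoidHom.coe_coe, ZMod.castHom_apply]
  set x := Multiplicative.toAdd τ with hx
  have h1 : τ ^ p = 1 ↔ (p : ZMod (p^(n+1))) * x = 0 := by
    constructor
    · intro h
      have := congrArg Multiplicative.toAdd h
      simpa [← nsmul_eq_mul] using this
    · intro h
      have := congrArg (Multiplicative.ofAdd (α := ZMod (p^(n+1)))) h
      simpa [← nsmul_eq_mul, hx] using this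
  have h2 : (ZMod.cast x : ZMod (p^n)) = ((x.val : ℕ) : ZMod (p^n)) := by
    rw [ZMod.natCast_val]
  have h3 : (p : ZMod (p^(n+1))) * x = (((p * x.val : ℕ) : ℕ) : ZMod (p^(n+1))) := by
    push_cast
    rw [ZMod.natCast_val, ZMod.cast_id]
  rw [h1, h3, ZMod.natCast_eq_zero_iff,
    show ((1 : Gn p n) = Multiplicative.ofAdd 0) from rfl,
    Multiplicative.ofAdd.apply_eq_iff_eq, h2, ZMod.natCast_eq_zero_iff]
  have h4 := mul_dvd_mul_iff_left (b := p^n) (c := x.val) (Nat.Prime.ne_zero (Fact.out : p.Prime))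
  rw [← pow_succ'] at h4
  exact h4

lemma piMap_def (x : Lam p (n+1)) : piMap p n x = MonoidAlgebra.mapDomain (projHom p n) x := rfl

lemma nuMap_apply (f : Lam p n) (τ : Gn p (n+1)) :
    (nuMap p n f).coeff τ = f.coeff (projHom p n τ) := by
  rw [nuMap, MonoidAlgebra.coeff_sum, Finsupp.finset_sum_apply]
  simp [Finsupp.single_apply]

lemma nuMap_injective : Function.Injective (nuMap p n) := by
  intro f g h
  ext σ
  have := congrArg (fun x : Lam p (n+1) => x.coeff (secFun p n σ)) h
  simpa [nuMap_apply, proj_sec] using this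
lemma nuMap_add (f g : Lam p n) : nuMap p n (f + g) = nuMap p n f + nuMap p n g := by
  ext τ; simp only [nuMap_apply, MonoidAlgebra.coeff_add, Finsupp.add_apply]

lemma nuMap_smul (c : ℤ_[p]) (f : Lam p n) : nuMap p n (c • f) = c • nuMap p n f := by
  ext τ; simp only [nuMap_apply, MonoidAlgebra.coeff_smul, Finsupp.smul_apply]

lemma nuMap_zero : nuMap p n 0 = 0 := by
  ext τ; simp [nuMap_apply]

lemma nuMap_sub (f g : Lam p n) : nuMap p n (f - g) = nuMap p n f - nuMap p n g := by
  ext τ; simp only [nuMap_apply, MonoidAlgebra.coeff_sub, Finsupp.sub_apply]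

lemma xi_mul_single (τ : Gn p (n+1)) (c : ℤ_[p]) (τ₀ : Gn p (n+1)) :
    (xi p (n+1) * MonoidAlgebra.single τ c).coeff τ₀
      = if projHom p n τ₀ = projHom p n τ then c else 0 := by
  rw [xi, Finset.sum_mul]
  simp only [MonoidAlgebra.of_apply, MonoidAlgebra.single_mul_single, one_mul]
  rw [MonoidAlgebra.coeff_sum, Finsupp.finset_sum_apply]
  simp only [MonoidAlgebra.coeff_single, Finsupp.single_apply]
  have key : ∀ σ : Gn p (n+1), (σ * τ = τ₀) ↔ (σ = τ₀ * τ⁻¹) := fun σ => by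
    constructor
    · intro h; exact eq_mul_inv_of_mul_eq h
    · intro h; rw [h, inv_mul_cancel_right]
  simp only [key]
  rw [Finset.sum_ite_eq' (Finset.univ.filter (fun σ : Gn p (n+1) => σ ^ p = 1)) (τ₀ * τ⁻¹)
    (fun _ => c)]
  have hmem : (τ₀ * τ⁻¹ ∈ Finset.univ.filter (fun σ : Gn p (n+1) => σ ^ p = 1))
      ↔ (projHom p n τ₀ = projHom p n τ) := by
    rw [Finset.mem_filter]
    simp only [Finset.mem_univ, true_and]
    rw [ker_iff, map_mul, map_inv, mul_inv_eq_one]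
  by_cases h : projHom p n τ₀ = projHom p n τ
  · rw [if_pos (hmem.mpr h), if_pos h]
  · rw [if_neg (fun hc => h (hmem.mp hc)), if_neg h]

lemma nu_pi (x : Lam p (n+1)) : nuMap p n (piMap p n x) = xi p (n+1) * x := by
  induction x using MonoidAlgebra.induction_linear with
  | zero => simp [nuMap_zero, map_zero]
  | add f g hf hg => rw [map_add, nuMap_add, hf, hg, mul_add]
  | single τ c =>
      have : piMap p n (MonoidAlgebra.single τ c)
          = MonoidAlgebra.single (projHom p n τ) c := by
        rw [piMap_def]; exact MonoidAlgebra.mapDomain_single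
      rw [this]
      ext τ₀
      rw [nuMap_apply, xi_mul_single, MonoidAlgebra.coeff_single, Finsupp.single_apply]
      simp [eq_comm]

noncomputable def secMap (f : Lam p n) : Lam p (n+1) :=
  MonoidAlgebra.mapDomain (secFun p n) f

lemma pi_sec (f : Lam p n) : piMap p n (secMap p n f) = f := by
  rw [piMap_def, secMap]
  have : (projHom p n) ∘ (secFun p n) = id := funext (proj_sec p n)
  ext σ
  rw [MonoidAlgebra.coeff_mapDomain, MonoidAlgebra.coeff_mapDomain, ← Finsupp.mapDomain_comp,
    this, Finsupp.mapDomain_id]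

lemma nu_eq (f : Lam p n) : nuMap p n f = xi p (n+1) * secMap p n f := by
  conv_lhs => rw [← pi_sec p n f]
  exact nu_pi p n _

lemma nu_mul (f : Lam p n) (y : Lam p (n+1)) :
    nuMap p n f * y = nuMap p n (f * piMap p n y) := by
  rw [nu_eq, mul_assoc, ← nu_pi, map_mul, pi_sec]

lemma card_ker :
    (Finset.univ.filter (fun σ : Gn p (n+1) => σ ^ p = 1)).card = p := by
  have h1 : (Finset.univ.filter (fun σ : Gn p (n+1) => σ ^ p = 1))
      = Finset.univ.filter (fun σ => σ ∈ (projHom p n).ker) := by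
    ext σ
    simp [ker_iff p n σ, MonoidHom.mem_ker]
  rw [h1, ← Fintype.card_subtype, ← Nat.card_eq_fintype_card]
  have h3 := Subgroup.card_eq_card_quotient_mul_card_subgroup (projHom p n).ker
  rw [Nat.card_congr
    (QuotientGroup.quotientKerEquivOfSurjective _ (projHom_surjective p n)).toEquiv] at h3
  have hG1 : Nat.card (Gn p (n+1)) = p ^ (n+1) := by
    rw [Nat.card_congr (Multiplicative.toAdd (α := ZMod (p^(n+1)))), Nat.card_zmod]
  have hG2 : Nat.card (Gn p n) = p ^ n := by
    rw [Nat.card_congr (Multiplicative.toAdd (α := ZMod (p^n))), Nat.card_zmod]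
  rw [hG1, hG2] at h3
  have h4 : p^n * p = p^n * Nat.card (projHom p n).ker := by rw [← pow_succ]; exact h3
  exact (Nat.eq_of_mul_eq_mul_left (pow_pos (Nat.Prime.pos Fact.out) n) h4).symm

lemma pi_xi : piMap p n (xi p (n+1)) = (p : ℕ) • (1 : Lam p n) := by
  rw [xi, map_sum]
  have h1 : ∀ σ ∈ Finset.univ.filter (fun σ : Gn p (n+1) => σ ^ p = 1),
      piMap p n (MonoidAlgebra.of ℤ_[p] (Gn p (n+1)) σ) = (1 : Lam p n) := by
    intro σ hσ
    rw [Finset.mem_filter] at hσ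
    rw [MonoidAlgebra.of_apply, piMap_def, MonoidAlgebra.mapDomain_single, (ker_iff p n σ).mp hσ.2]
    rfl
  rw [Finset.sum_congr rfl h1, Finset.sum_const, card_ker]

lemma pi_nu (f : Lam p n) : piMap p n (nuMap p n f) = (p : ℕ) • f := by
  rw [nu_eq, map_mul, pi_xi, pi_sec, smul_mul_assoc, one_mul]

lemma nu_mem_span_xi (f : Lam p n) : nuMap p n f ∈ Ideal.span {xi p (n+1)} :=
  Ideal.mem_span_singleton.mpr ⟨secMap p n f, nu_eq p n f⟩

lemma mem_span_xi (x : Lam p (n+1)) (h : x ∈ Ideal.span {xi p (n+1)}) :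
    ∃ f : Lam p n, x = nuMap p n f := by
  obtain ⟨y, hy⟩ := Ideal.mem_span_singleton.mp h
  exact ⟨piMap p n y, by rw [hy, nu_pi]⟩

lemma allDvd_pi (x : Lam p (n+1)) (h : ∀ τ, (p : ℤ_[p]) ∣ x.coeff τ) :
    ∀ σ, (p : ℤ_[p]) ∣ (piMap p n x).coeff σ := by
  intro σ
  rw [piMap_def, MonoidAlgebra.coeff_mapDomain, Finsupp.mapDomain]
  rw [Finsupp.sum_apply]
  apply Finset.dvd_sum
  intro i hi
  simp only [Finsupp.single_apply]
  split
  · exact h i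
  · exact dvd_zero _

lemma allDvd_nu (f : Lam p n) (h : ∀ τ, (p : ℤ_[p]) ∣ (nuMap p n f).coeff τ) :
    ∀ σ, (p : ℤ_[p]) ∣ f.coeff σ := by
  intro σ
  have := h (secFun p n σ)
  rwa [nuMap_apply, proj_sec] at this

lemma not_isUnit_p : ¬ IsUnit (p : ℤ_[p]) := by
  intro h
  have := PadicInt.norm_p (p := p)
  rw [PadicInt.isUnit_iff] at h
  rw [h] at this
  have hp1 : (1 : ℝ) < p := by exact_mod_cast (Fact.out : p.Prime).one_lt
  have : (p : ℝ)⁻¹ < 1 := inv_lt_one_of_one_lt₀ hp1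
  linarith

lemma not_allDvd_of_isUnit (m : ℕ) (f : Lam p m) (hf : IsUnit f) :
    ¬ (∀ σ, (p : ℤ_[p]) ∣ f.coeff σ) := by
  intro h
  set aug := (MonoidAlgebra.lift ℤ_[p] ℤ_[p] (Gn p m)) 1 with haug
  have h1 : IsUnit (aug f) := hf.map aug
  have h2 : (p : ℤ_[p]) ∣ aug f := by
    rw [haug, MonoidAlgebra.lift_apply]
    apply Finset.dvd_sum
    intro i hi
    simpa using h i
  exact not_isUnit_p p (isUnit_of_dvd_unit h2 h1)

lemma nu_mul_right (f y : Lam p n) : nuMap p n (f * y) = nuMap p n f * secMap p n y := by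
  conv_lhs => rw [← pi_sec p n y]
  rw [← nu_mul]

lemma nu_pi_mul (z : Lam p (n+1)) (y : Lam p n) :
    nuMap p n (piMap p n z * y) = xi p (n+1) * z * secMap p n y := by
  conv_lhs => rw [← pi_sec p n y, ← map_mul]
  rw [nu_pi, mul_assoc]

end Stmt18Aux

open Stmt18Aux

set_option maxHeartbeats 1000000 in
/-- With `J_0 = (P_0)`, `J_{n+1} = (P_{n+1}, ν(P_n))`, one has `ν(J_n) ⊆ J_{n+1}`
and a short exact sequence of `ℤ_p`-modules
`0 → Λ_n/J_n → Λ_{n+1}/J_{n+1} → O/(χ(P_{n+1})) → 0`, where `χ : Λ_{n+1} → O` is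
(induced by) a character of exact order `p^{n+1}`, i.e. a surjection onto a domain
with kernel `ξ_{n+1}Λ_{n+1}`. -/
theorem stmt18 (p : ℕ) [Fact p.Prime] (P : ∀ n, Lam p n)
    (hP0 : IsUnit (P 0)) (hP1 : IsUnit (P 1))
    (a : ℤ_[p]) (ha : (p : ℤ_[p]) ∣ a)
    (hrec : ∀ n : ℕ, piMap p (n+1) (P (n+2)) = a • P (n+1) - nuMap p n (P n))
    (hP10 : ∃ u : ℤ_[p], IsUnit u ∧ piMap p 0 (P 1) = u • P 0)
    (J : ∀ n, Ideal (Lam p n))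
    (hJ0 : J 0 = Ideal.span {P 0})
    (hJ : ∀ n : ℕ, J (n+1) = Ideal.span {P (n+1), nuMap p n (P n)})
    (n : ℕ)
    (O : Type) [CommRing O] [IsDomain O] [Algebra ℤ_[p] O]
    (χ : Lam p (n+1) →ₐ[ℤ_[p]] O) (hχsurj : Function.Surjective χ)
    (hχker : RingHom.ker χ.toRingHom = Ideal.span {xi p (n+1)}) :
    (∀ x ∈ J n, nuMap p n x ∈ J (n+1)) ∧
    ∃ (α : (Lam p n ⧸ J n) →ₗ[ℤ_[p]] (Lam p (n+1) ⧸ J (n+1)))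
      (β : (Lam p (n+1) ⧸ J (n+1)) →ₗ[ℤ_[p]] (O ⧸ Ideal.span {χ (P (n+1))})),
      (∀ x : Lam p n,
        α (Ideal.Quotient.mk (J n) x) = Ideal.Quotient.mk (J (n+1)) (nuMap p n x)) ∧
      (∀ y : Lam p (n+1),
        β (Ideal.Quotient.mk (J (n+1)) y) =
          Ideal.Quotient.mk (Ideal.span {χ (P (n+1))}) (χ y)) ∧
      Function.Injective α ∧ Function.Surjective β ∧
      (∀ b, β b = 0 ↔ b ∈ LinearMap.range α) := by
  -- Part 1 : ν (J n) ⊆ J (n+1)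
  have part1 : ∀ x ∈ J n, nuMap p n x ∈ J (n+1) := by
    intro x hx
    rw [hJ n, Ideal.mem_span_pair]
    cases n with
    | zero =>
      rw [hJ0, Ideal.mem_span_singleton] at hx
      obtain ⟨c, hc⟩ := hx
      refine ⟨0, secMap p 0 c, ?_⟩
      rw [hc, nu_mul_right]
      ring
    | succ m =>
      rw [hJ m, Ideal.mem_span_pair] at hx
      obtain ⟨g, h, hgh⟩ := hx
      have hrecm : nuMap p m (P m) = a • P (m+1) - piMap p (m+1) (P (m+2)) := by
        rw [hrec m]; abel
      refine ⟨-(xi p (m+2) * secMap p (m+1) h), secMap p (m+1) g + a • secMap p (m+1) h, ?_⟩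
      have e : nuMap p (m+1) x
          = nuMap p (m+1) (P (m+1)) * secMap p (m+1) g
            + a • (nuMap p (m+1) (P (m+1)) * secMap p (m+1) h)
            - xi p (m+2) * P (m+2) * secMap p (m+1) h := by
        rw [← hgh, nuMap_add, hrecm, mul_sub, nuMap_sub, mul_smul_comm, nuMap_smul,
          mul_comm g (P (m+1)), nu_mul_right, mul_comm h (P (m+1)), nu_mul_right,
          mul_comm h (piMap p (m+1) (P (m+2))), nu_pi_mul]
        abel
      rw [e]
      simp only [Algebra.smul_def]
      ring
  refine ⟨part1, ?_⟩
  -- χ kills the image of ν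
  have hχ0 : ∀ f : Lam p n, χ (nuMap p n f) = 0 := by
    intro f
    have hmem : nuMap p n f ∈ RingHom.ker χ.toRingHom := by
      rw [hχker]; exact nu_mem_span_xi p n f
    rw [RingHom.mem_ker] at hmem
    simpa using hmem
  have hker' : ∀ y : Lam p (n+1), χ y = 0 → ∃ f, y = nuMap p n f := by
    intro y hy
    apply mem_span_xi p n y
    rw [← hχker, RingHom.mem_ker]
    simpa using hy
  -- no P m has all coefficients divisible by p
  have hND : ∀ m, ¬ (∀ σ, (p : ℤ_[p]) ∣ (P m).coeff σ) := by
    have H : ∀ m, (¬ (∀ σ, (p:ℤ_[p]) ∣ (P m).coeff σ)) ∧ (¬ (∀ σ, (p:ℤ_[p]) ∣ (P (m+1)).coeff σ)) := by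
      intro m
      induction m with
      | zero => exact ⟨not_allDvd_of_isUnit p 0 _ hP0, not_allDvd_of_isUnit p 1 _ hP1⟩
      | succ k ih =>
        refine ⟨ih.2, ?_⟩
        intro hD
        apply ih.1
        have h1 := allDvd_pi p (k+1) _ hD
        apply allDvd_nu p k
        intro τ
        have e : nuMap p k (P k) = a • P (k+1) - piMap p (k+1) (P (k+2)) := by
          rw [hrec k]; abel
        rw [e, MonoidAlgebra.coeff_sub, Finsupp.sub_apply, MonoidAlgebra.coeff_smul, Finsupp.smul_apply]
        refine dvd_sub (Dvd.dvd.mul_right ?_ _) (h1 τ)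
        simpa [smul_eq_mul] using ha
    exact fun m => (H m).1
  -- χ (P (n+1)) ≠ 0
  have hχP : χ (P (n+1)) ≠ 0 := by
    intro h0
    obtain ⟨w, hw⟩ := hker' _ h0
    have hpi : piMap p n (P (n+1)) = (p:ℕ) • w := by rw [hw, pi_nu]
    cases n with
    | zero =>
      obtain ⟨u, hu, hu'⟩ := hP10
      apply hND 0
      intro σ
      have e : (u • P 0).coeff σ = ((p:ℕ) • w).coeff σ := by
        rw [hu'.symm.trans hpi]
      rw [MonoidAlgebra.coeff_smul, Finsupp.smul_apply, MonoidAlgebra.coeff_smul, Finsupp.smul_apply,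
        smul_eq_mul] at e
      have hd : (p:ℤ_[p]) ∣ u * (P 0).coeff σ := by
        rw [e, nsmul_eq_mul]
        exact Dvd.dvd.mul_right (by simp) _
      exact (IsUnit.dvd_mul_left hu).mp hd
    | succ m =>
      apply hND m
      apply allDvd_nu p m
      intro τ
      have e : nuMap p m (P m) = a • P (m+1) - (p:ℕ) • w := by
        rw [← hpi, hrec m]; abel
      rw [e, MonoidAlgebra.coeff_sub, Finsupp.sub_apply, MonoidAlgebra.coeff_smul, Finsupp.smul_apply,
        MonoidAlgebra.coeff_smul, Finsupp.smul_apply]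
      refine dvd_sub (Dvd.dvd.mul_right ?_ _) ?_
      · simpa [smul_eq_mul] using ha
      · rw [nsmul_eq_mul]
        exact Dvd.dvd.mul_right (by simp) _
  -- the key injectivity statement
  have hcore : ∀ f : Lam p n, nuMap p n f ∈ J (n+1) → f ∈ J n := by
    intro f hf
    rw [hJ n, Ideal.mem_span_pair] at hf
    obtain ⟨g, h, hgh⟩ := hf
    have hchig : χ g = 0 := by
      have hc := congrArg χ hgh
      rw [map_add, map_mul, map_mul, hχ0 (P n), hχ0 f, mul_zero, add_zero] at hc
      rcases mul_eq_zero.mp hc with h1 | h1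
      · exact h1
      · exact absurd h1 hχP
    obtain ⟨y, hy⟩ := hker' g hchig
    have e : nuMap p n (y * piMap p n (P (n+1)) + P n * piMap p n h) = nuMap p n f := by
      rw [nuMap_add, ← nu_mul, ← nu_mul, ← hy, ← hgh]
      ring
    have ef : y * piMap p n (P (n+1)) + P n * piMap p n h = f := nuMap_injective p n e
    cases n with
    | zero =>
      obtain ⟨u, hu, hu'⟩ := hP10
      rw [hJ0, Ideal.mem_span_singleton]
      refine ⟨u • y + piMap p 0 h, ?_⟩
      rw [← ef, hu']
      simp only [Algebra.smul_def]
      ring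
    | succ m =>
      rw [hJ m, Ideal.mem_span_pair]
      refine ⟨a • y + piMap p (m+1) h, -y, ?_⟩
      rw [← ef, hrec m]
      simp only [Algebra.smul_def]
      ring
  -- construction of α
  let nuL : Lam p n →ₗ[ℤ_[p]] Lam p (n+1) :=
    { toFun := nuMap p n, map_add' := nuMap_add p n, map_smul' := nuMap_smul p n }
  let q2 : Lam p (n+1) →ₗ[ℤ_[p]] (Lam p (n+1) ⧸ J (n+1)) :=
    (Ideal.Quotient.mkₐ ℤ_[p] (J (n+1))).toLinearMap
  have hsub : (J n).restrictScalars ℤ_[p] ≤ LinearMap.ker (q2 ∘ₗ nuL) := by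
    intro x hx
    rw [LinearMap.mem_ker, LinearMap.comp_apply]
    show Ideal.Quotient.mkₐ ℤ_[p] (J (n+1)) (nuMap p n x) = 0
    rw [Ideal.Quotient.mkₐ_eq_mk, Ideal.Quotient.eq_zero_iff_mem]
    exact part1 x hx
  let α : (Lam p n ⧸ J n) →ₗ[ℤ_[p]] (Lam p (n+1) ⧸ J (n+1)) :=
    (Submodule.liftQ ((J n).restrictScalars ℤ_[p]) (q2 ∘ₗ nuL) hsub) ∘ₗ
      (Submodule.Quotient.restrictScalarsEquiv ℤ_[p] (J n)).symm.toLinearMap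
  have hα : ∀ x : Lam p n,
      α (Ideal.Quotient.mk (J n) x) = Ideal.Quotient.mk (J (n+1)) (nuMap p n x) := by
    intro x
    show (Submodule.liftQ ((J n).restrictScalars ℤ_[p]) (q2 ∘ₗ nuL) hsub)
      ((Submodule.Quotient.restrictScalarsEquiv ℤ_[p] (J n)).symm
        (Submodule.Quotient.mk x)) = _
    rw [Submodule.Quotient.restrictScalarsEquiv_symm_mk, Submodule.liftQ_apply]
    rfl
  -- construction of β
  have hJspan : ∀ z ∈ J (n+1), χ z ∈ Ideal.span {χ (P (n+1))} := by
    intro z hz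
    rw [hJ n, Ideal.mem_span_pair] at hz
    obtain ⟨g, h, hgh⟩ := hz
    rw [← hgh, map_add, map_mul, map_mul, hχ0 (P n), mul_zero, add_zero]
    exact Ideal.mul_mem_left _ _ (Ideal.subset_span rfl)
  have hker2 : ∀ z ∈ J (n+1),
      ((Ideal.Quotient.mkₐ ℤ_[p] (Ideal.span {χ (P (n+1))})).comp χ) z = 0 := by
    intro z hz
    rw [AlgHom.comp_apply, Ideal.Quotient.mkₐ_eq_mk, Ideal.Quotient.eq_zero_iff_mem]
    exact hJspan z hz
  let β : (Lam p (n+1) ⧸ J (n+1)) →ₗ[ℤ_[p]] (O ⧸ Ideal.span {χ (P (n+1))}) :=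
    (Ideal.Quotient.liftₐ (J (n+1))
      ((Ideal.Quotient.mkₐ ℤ_[p] (Ideal.span {χ (P (n+1))})).comp χ) hker2).toLinearMap
  have hβ : ∀ y : Lam p (n+1),
      β (Ideal.Quotient.mk (J (n+1)) y)
        = Ideal.Quotient.mk (Ideal.span {χ (P (n+1))}) (χ y) := by
    intro y
    show Ideal.Quotient.liftₐ (J (n+1))
      ((Ideal.Quotient.mkₐ ℤ_[p] (Ideal.span {χ (P (n+1))})).comp χ) hker2
        (Ideal.Quotient.mk (J (n+1)) y) = _
    rfl
  refine ⟨α, β, hα, hβ, ?_, ?_, ?_⟩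
  · -- injectivity of α
    intro x y hxy
    obtain ⟨f, rfl⟩ := Ideal.Quotient.mk_surjective x
    obtain ⟨g, rfl⟩ := Ideal.Quotient.mk_surjective y
    rw [hα, hα] at hxy
    rw [Ideal.Quotient.mk_eq_mk_iff_sub_mem] at hxy ⊢
    rw [← nuMap_sub] at hxy
    exact hcore _ hxy
  · -- surjectivity of β
    intro b
    obtain ⟨o, rfl⟩ := Ideal.Quotient.mk_surjective b
    obtain ⟨y, rfl⟩ := hχsurj o
    exact ⟨Ideal.Quotient.mk _ y, hβ y⟩
  · -- exactness
    intro b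
    obtain ⟨y, rfl⟩ := Ideal.Quotient.mk_surjective b
    rw [hβ]
    constructor
    · intro h0
      rw [Ideal.Quotient.eq_zero_iff_mem, Ideal.mem_span_singleton] at h0
      obtain ⟨c, hc⟩ := h0
      obtain ⟨z, rfl⟩ := hχsurj c
      have hz : χ (y - P (n+1) * z) = 0 := by
        rw [map_sub, map_mul, hc]; ring
      obtain ⟨w, hw⟩ := hker' _ hz
      refine ⟨Ideal.Quotient.mk (J n) w, ?_⟩
      rw [hα, Ideal.Quotient.mk_eq_mk_iff_sub_mem, ← hw]
      have : y - P (n+1) * z - y = -(P (n+1) * z) := by ring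
      rw [this]
      apply neg_mem
      rw [hJ n, Ideal.mem_span_pair]
      exact ⟨z, 0, by ring⟩
    · rintro ⟨c, hc⟩
      obtain ⟨f, rfl⟩ := Ideal.Quotient.mk_surjective c
      rw [hα, Ideal.Quotient.mk_eq_mk_iff_sub_mem] at hc
      have : χ (nuMap p n f - y) ∈ Ideal.span {χ (P (n+1))} := hJspan _ hc
      rw [map_sub, hχ0 f, zero_sub] at this
      rw [Ideal.Quotient.eq_zero_iff_mem]
      simpa using neg_mem this
end
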